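/- arXiv:2202.07763 — 3 statements merged into one kernel-verified Lean document; each statement's English description precedes it below -/
import Mathlib

section
/- Let f(q) = Σ_{n≥0} a_n q^n with a_0 ≠ 0 be analytic and zero-free on the open unit disk, define c_n as the Maclaurin coefficients of 1/f, and set C(n) = c_0 + c_1 + ⋯ + c_n and A(n) = a_0 + ⋯ + a_n. If A := lim_{n→∞} A(n)/n exists and A ≠ 0, then as q → 1 radially (q real, q → 1⁻), Σ_{n≥0} C(n) q^n → 1/A. -/
open Filter
open scoped NNReal ENNReal
set_option maxHeartbeats 1000000

lemma aux_norm_summable {b : ℕ → ℂ}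
    (h : ∀ q : ℂ, ‖q‖ < 1 → Summable (fun n => b n * q ^ n)) :
    ∀ r : ℝ, 0 ≤ r → r < 1 → Summable (fun n => ‖b n‖ * r ^ n) := by
  intro r hr0 hr1
  set r' : ℝ := (1 + r) / 2 with hr'
  have hrr' : r < r' := by simp [hr']; linarith
  have hr'0 : 0 < r' := by linarith
  have hr'1 : r' < 1 := by simp [hr']; linarith
  have hs : Summable (fun n => b n * (r' : ℂ) ^ n) := by
    apply h
    simp [Complex.norm_real, abs_of_pos hr'0, hr'1]
  have htend : Tendsto (fun n => ‖b n * (r' : ℂ) ^ n‖) atTop (nhds 0) := by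
    simpa using (hs.tendsto_atTop_zero).norm
  obtain ⟨M, hM⟩ := htend.bddAbove_range
  have key : ∀ n, ‖b n‖ * r ^ n ≤ M * (r / r') ^ n := by
    intro n
    have h1 : ‖b n * (r' : ℂ) ^ n‖ ≤ M := hM (Set.mem_range_self n)
    have h2 : ‖b n * (r' : ℂ) ^ n‖ = ‖b n‖ * r' ^ n := by
      simp [norm_mul, norm_pow, Complex.norm_real, abs_of_pos hr'0]
    rw [h2] at h1
    have : ‖b n‖ * r ^ n = (‖b n‖ * r' ^ n) * (r / r') ^ n := by
      field_simp [div_pow]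
      rw [mul_assoc, ← mul_pow, show r' * (r / r') = r by field_simp]
    rw [this]
    have : (0:ℝ) ≤ (r / r') ^ n := pow_nonneg (div_nonneg hr0 hr'0.le) n
    exact mul_le_mul_of_nonneg_right h1 this
  refine Summable.of_nonneg_of_le (fun n => mul_nonneg (norm_nonneg _) (pow_nonneg hr0 n)) key ?_
  exact (summable_geometric_of_lt_one (div_nonneg hr0 hr'0.le)
    (by rw [div_lt_one hr'0]; exact hrr')).mul_left M

lemma abel_aux (d : ℕ → ℂ)
    (hd : Tendsto (fun n : ℕ => d n / n) atTop (nhds 0))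
    (hds : ∀ r : ℝ, 0 ≤ r → r < 1 → Summable (fun n => ‖d n‖ * r ^ n)) :
    Tendsto (fun q : ℝ => (1 - (q:ℂ))^2 * ∑' n, d n * (q:ℂ) ^ n)
      (nhdsWithin 1 (Set.Iio 1)) (nhds 0) := by
  rw [NormedAddCommGroup.tendsto_nhds_zero]
  intro ε hε
  have h4 : (0:ℝ) < ε / 4 := by linarith
  have hevt : ∀ᶠ n : ℕ in atTop, ‖d n / (n:ℂ)‖ < ε / 4 := by
    have := Metric.tendsto_nhds.1 hd (ε/4) h4
    simpa [dist_eq_norm] using this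
  obtain ⟨N₀, hN₀⟩ := eventually_atTop.1 hevt
  set N : ℕ := N₀ + 1 with hN
  have hNd : ∀ m : ℕ, N ≤ m → ‖d m‖ ≤ ε / 4 * m := by
    intro m hm
    have hm1 : 1 ≤ m := le_trans (Nat.le_add_left 1 N₀) hm
    have := hN₀ m (le_trans (Nat.le_succ N₀) hm)
    rw [norm_div, Complex.norm_natCast] at this
    have hmpos : (0:ℝ) < m := by exact_mod_cast hm1
    calc ‖d m‖ = ‖d m‖ / m * m := by field_simp
    _ ≤ ε / 4 * m := mul_le_mul_of_nonneg_right (le_of_lt this) hmpos.le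
  set H : ℝ := ∑ i ∈ Finset.range N, ‖d i‖ with hH
  have hH0 : 0 ≤ H := Finset.sum_nonneg fun i _ => norm_nonneg _
  set δ : ℝ := min (1/2) (ε / (2 * (H + 1))) with hδ
  have hδ0 : 0 < δ := lt_min (by norm_num) (div_pos hε (by linarith))
  have hδhalf : δ ≤ 1/2 := min_le_left _ _
  filter_upwards [Ioo_mem_nhdsLT_of_mem
    (Set.mem_Ioc.2 ⟨(by linarith : (1:ℝ) - δ < 1), le_refl (1:ℝ)⟩)] with q hq
  obtain ⟨hq1, hq2⟩ := hq
  have hq0 : 0 < q := by linarith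
  have hq1' : 0 < 1 - q := by linarith
  have hqabs : ‖q‖ < 1 := by rw [Real.norm_eq_abs, abs_of_pos hq0]; exact hq2
  have hqn : ∀ n : ℕ, ‖(q:ℂ) ^ n‖ = q ^ n := by
    intro n; rw [norm_pow, Complex.norm_real, Real.norm_eq_abs, abs_of_pos hq0]
  have hsq : Summable (fun n => ‖d n‖ * q ^ n) := hds q hq0.le hq2
  have hvsum : Summable (fun m : ℕ => ε / 4 * ((m:ℝ) * q ^ m)) := by
    have h := (summable_pow_mul_geometric_of_norm_lt_one (R := ℝ) 1 hqabs).mul_left (ε/4)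
    simpa [pow_one] using h
  have htail : (∑' n : ℕ, ‖d (n + N)‖ * q ^ (n + N)) ≤ ε / 4 * (q / (1 - q)^2) := by
    have step1 : (∑' n : ℕ, ‖d (n + N)‖ * q ^ (n + N))
        ≤ ∑' n : ℕ, ε / 4 * (((n + N : ℕ):ℝ) * q ^ (n + N)) := by
      apply Summable.tsum_le_tsum
      · intro n
        have h1 : ‖d (n+N)‖ ≤ ε/4 * ((n+N:ℕ):ℝ) := hNd _ (Nat.le_add_left N n)
        calc ‖d (n+N)‖ * q^(n+N) ≤ (ε/4 * ((n+N:ℕ):ℝ)) * q^(n+N) :=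
              mul_le_mul_of_nonneg_right h1 (pow_nonneg hq0.le _)
          _ = ε/4 * (((n+N:ℕ):ℝ) * q^(n+N)) := by ring
      · exact (summable_nat_add_iff (f := fun n => ‖d n‖ * q ^ n) N).2 hsq
      · exact (summable_nat_add_iff (f := fun m : ℕ => ε / 4 * ((m:ℝ) * q ^ m)) N).2 hvsum
    have hhead : 0 ≤ ∑ i ∈ Finset.range N, ε / 4 * ((i:ℝ) * q ^ i) :=
      Finset.sum_nonneg fun i _ => mul_nonneg h4.le
        (mul_nonneg (Nat.cast_nonneg _) (pow_nonneg hq0.le _))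
    have step2 : (∑' n : ℕ, ε / 4 * (((n + N : ℕ):ℝ) * q ^ (n + N)))
        ≤ ∑' m : ℕ, ε / 4 * ((m:ℝ) * q ^ m) := by
      have heq := Summable.sum_add_tsum_nat_add (f := fun m : ℕ => ε / 4 * ((m:ℝ) * q ^ m)) N hvsum
      have : (∑' n : ℕ, ε / 4 * (((n + N : ℕ):ℝ) * q ^ (n + N)))
          = (∑' m : ℕ, ε / 4 * ((m:ℝ) * q ^ m)) - ∑ i ∈ Finset.range N, ε / 4 * ((i:ℝ) * q ^ i) := by
        rw [← heq]; push_cast; ring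
      rw [this]
      linarith
    have step3 : (∑' m : ℕ, ε / 4 * ((m:ℝ) * q ^ m)) = ε / 4 * (q / (1 - q)^2) := by
      rw [tsum_mul_left]
      congr 1
      exact tsum_coe_mul_geometric_of_norm_lt_one hqabs
    exact step1.trans (step2.trans_eq step3)
  have hsum_bound : (∑' n, ‖d n‖ * q ^ n) ≤ H + ε / 4 * (q / (1 - q)^2) := by
    rw [← Summable.sum_add_tsum_nat_add N hsq]
    apply add_le_add
    · apply Finset.sum_le_sum
      intro i _
      calc ‖d i‖ * q ^ i ≤ ‖d i‖ * 1 :=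
            mul_le_mul_of_nonneg_left (pow_le_one₀ hq0.le hq2.le) (norm_nonneg _)
      _ = ‖d i‖ := mul_one _
    · exact htail
  have hnorm : ‖(1 - (q:ℂ))^2 * ∑' n, d n * (q:ℂ) ^ n‖
      ≤ (1 - q)^2 * (H + ε / 4 * (q / (1 - q)^2)) := by
    rw [norm_mul]
    have h1 : ‖(1 - (q:ℂ))^2‖ = (1 - q)^2 := by
      rw [norm_pow]
      have : (1 - (q:ℂ)) = ((1 - q : ℝ) : ℂ) := by push_cast; ring
      rw [this, Complex.norm_real, Real.norm_eq_abs, abs_of_pos hq1']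
    rw [h1]
    apply mul_le_mul_of_nonneg_left _ (sq_nonneg _)
    calc ‖∑' n, d n * (q:ℂ) ^ n‖ ≤ ∑' n, ‖d n‖ * q ^ n := by
          have hsq' : Summable (fun n => ‖d n * (q:ℂ) ^ n‖) := by
            apply hsq.congr; intro n; rw [norm_mul, hqn]
          have := norm_tsum_le_tsum_norm hsq'
          calc ‖∑' n, d n * (q:ℂ) ^ n‖ ≤ ∑' n, ‖d n * (q:ℂ) ^ n‖ := this
            _ = ∑' n, ‖d n‖ * q ^ n := by
                congr 1; funext n; rw [norm_mul, hqn]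
      _ ≤ H + ε / 4 * (q / (1 - q)^2) := hsum_bound
  have hfinal : (1 - q)^2 * (H + ε / 4 * (q / (1 - q)^2)) < ε := by
    have e1 : (1 - q)^2 * (ε / 4 * (q / (1 - q)^2)) = ε / 4 * q := by
      field_simp
    have e2 : (1 - q)^2 * H ≤ (1 - q) * H := by
      have h2 : (1 - q)^2 ≤ 1 - q := by nlinarith
      exact mul_le_mul_of_nonneg_right h2 hH0
    have e3 : (1 - q) * H < ε / 2 := by
      have hlt : 1 - q < δ := by linarith
      have hle : δ ≤ ε / (2 * (H + 1)) := min_le_right _ _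
      have hHpos : (0:ℝ) < H + 1 := by linarith
      have h3 : (1 - q) * (H + 1) < δ * (H + 1) := by nlinarith
      have h5 : δ * (H + 1) ≤ ε / (2 * (H + 1)) * (H + 1) :=
        mul_le_mul_of_nonneg_right hle hHpos.le
      have heq : ε / (2 * (H + 1)) * (H + 1) = ε / 2 := by
        field_simp
      nlinarith
    have e4 : ε / 4 * q < ε / 4 := by nlinarith
    calc (1 - q)^2 * (H + ε / 4 * (q / (1 - q)^2))
        = (1 - q)^2 * H + (1 - q)^2 * (ε / 4 * (q / (1 - q)^2)) := by ring
      _ = (1 - q)^2 * H + ε / 4 * q := by rw [e1]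
      _ < ε := by linarith
  exact lt_of_le_of_lt hnorm hfinal

lemma inverse_coeffs (a : ℕ → ℂ) (ha0 : a 0 ≠ 0)
    (hsum : ∀ q : ℂ, ‖q‖ < 1 → Summable (fun n => a n * q ^ n))
    (hzero : ∀ q : ℂ, ‖q‖ < 1 → (∑' n, a n * q ^ n) ≠ 0) :
    ∃ t : ℕ → ℂ,
      (∀ n, t n = PowerSeries.coeff n (PowerSeries.mk a)⁻¹) ∧
      ∀ z : ℂ, ‖z‖ < 1 → HasSum (fun n => t n * z ^ n) (∑' n, a n * z ^ n)⁻¹ := by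
  set f : ℂ → ℂ := fun q => ∑' n, a n * q ^ n with hf
  have hna := aux_norm_summable hsum
  have hrad : 1 ≤ (FormalMultilinearSeries.ofScalars ℂ a).radius := by
    apply ENNReal.le_of_forall_nnreal_lt
    intro r hr
    apply FormalMultilinearSeries.le_radius_of_summable
    have hr1 : (r : ℝ) < 1 := by exact_mod_cast hr
    have h1 : Summable (fun n => ‖a n‖ * (r:ℝ) ^ n) := hna r r.coe_nonneg hr1
    apply h1.congr
    intro n
    rw [FormalMultilinearSeries.ofScalars_norm]
  have hball : HasFPowerSeriesOnBall f (FormalMultilinearSeries.ofScalars ℂ a) 0 1 :=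
    { r_le := hrad
      r_pos := by norm_num
      hasSum := by
        intro y hy
        have hy' : ‖y‖ < 1 := by
          rw [mem_emetric_ball_zero_iff, enorm_eq_nnnorm] at hy
          exact_mod_cast hy
        have h := (hsum y hy').hasSum
        rw [zero_add, show (fun n : ℕ => FormalMultilinearSeries.ofScalars ℂ a n fun _ => y)
          = fun n => a n * y ^ n from funext fun n => by
            rw [FormalMultilinearSeries.ofScalars_apply_eq, smul_eq_mul]]
        exact h }
  have hfd : DifferentiableOn ℂ f (Metric.ball 0 1) := by
    have h := hball.differentiableOn
    rwa [← ENNReal.coe_one, Metric.emetric_ball_nnreal] at h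
  set g : ℂ → ℂ := fun q => (f q)⁻¹ with hg
  have hgd : ∀ R : ℝ≥0, (R:ℝ) < 1 → DifferentiableOn ℂ g (Metric.closedBall 0 R) := by
    intro R hR
    apply DifferentiableOn.inv
    · exact hfd.mono (Metric.closedBall_subset_ball hR)
    · intro x hx
      apply hzero
      have := Metric.mem_closedBall.1 hx
      rw [dist_zero_right] at this
      linarith
  set p := cauchyPowerSeries g 0 ((1/2 : ℝ≥0) : ℝ) with hpdef
  have hp0 : HasFPowerSeriesOnBall g p 0 (1/2 : ℝ≥0) :=
    (hgd (1/2) (by norm_num)).hasFPowerSeriesOnBall (by norm_num)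
  have hp : HasFPowerSeriesAt g p 0 := hp0.hasFPowerSeriesAt
  have hpr : ∀ z : ℂ, ‖z‖ < 1 → HasSum (fun n => p.coeff n * z ^ n) (g z) := by
    intro z hz
    set R : ℝ≥0 := ((‖z‖ + 1) / 2).toNNReal with hR
    have hzn : 0 ≤ ‖z‖ := norm_nonneg z
    have hRc : (R : ℝ) = (‖z‖ + 1) / 2 := Real.coe_toNNReal _ (by linarith)
    have hzR : ‖z‖ < (R : ℝ) := by rw [hRc]; linarith
    have hR1 : (R : ℝ) < 1 := by rw [hRc]; linarith
    have hR0 : 0 < R := by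
      rw [← NNReal.coe_pos, hRc]; linarith
    have hq := (hgd R hR1).hasFPowerSeriesOnBall hR0
    have heq : cauchyPowerSeries g 0 R = p :=
      hq.hasFPowerSeriesAt.eq_formalMultilinearSeries hp
    rw [heq] at hq
    have hmem : z ∈ EMetric.ball (0:ℂ) R := by
      change z ∈ Metric.eball (0:ℂ) R
      rw [mem_emetric_ball_zero_iff, enorm_eq_nnnorm]
      exact_mod_cast hzR
    have h := hq.hasSum hmem
    simpa [FormalMultilinearSeries.apply_eq_pow_smul_coeff, smul_eq_mul, zero_add,
      mul_comm] using h
  -- the coefficients agree with the formal inverse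
  set t := p.coeff with ht
  have hnc := aux_norm_summable (b := t) (fun q hq => (hpr q hq).summable)
  set e : ℕ → ℂ := fun n => ∑ kl ∈ Finset.HasAntidiagonal.antidiagonal n, a kl.1 * t kl.2 with he
  have hone : ∀ z : ℂ, ‖z‖ < 1 → HasSum (fun n => e n * z ^ n) 1 := by
    intro z hz
    have hfa : Summable fun n => ‖a n * z ^ n‖ := by
      apply (hna ‖z‖ (norm_nonneg z) hz).congr
      intro n; rw [norm_mul, norm_pow]
    have hfc : Summable fun n => ‖t n * z ^ n‖ := by
      apply (hnc ‖z‖ (norm_nonneg z) hz).congr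
      intro n; rw [norm_mul, norm_pow]
    have hterm : ∀ n, (∑ kl ∈ Finset.HasAntidiagonal.antidiagonal n, (a kl.1 * z ^ kl.1) * (t kl.2 * z ^ kl.2))
        = e n * z ^ n := by
      intro n
      rw [he]
      simp only
      rw [Finset.sum_mul]
      apply Finset.sum_congr rfl
      intro kl hkl
      have hkln : kl.1 + kl.2 = n := Finset.HasAntidiagonal.mem_antidiagonal.1 hkl
      rw [← hkln, pow_add]
      ring
    have hmul : (∑' n, a n * z ^ n) * (∑' n, t n * z ^ n) = ∑' n, e n * z ^ n := by
      rw [tsum_mul_tsum_eq_tsum_sum_antidiagonal_of_summable_norm hfa hfc]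
      exact tsum_congr hterm
    have hsum_e : Summable (fun n => e n * z ^ n) := by
      have h := (summable_norm_sum_mul_antidiagonal_of_summable_norm hfa hfc).of_norm
      apply h.congr
      intro n
      exact hterm n
    have htsum1 : (∑' n, e n * z ^ n) = 1 := by
      rw [← hmul, (hpr z hz).tsum_eq]
      exact mul_inv_cancel₀ (hzero z hz)
    exact htsum1 ▸ hsum_e.hasSum
  have hcoeff : ∀ (b : ℕ → ℂ) (n : ℕ), (FormalMultilinearSeries.ofScalars ℂ b).coeff n = b n := by
    intro b n
    show FormalMultilinearSeries.ofScalars ℂ b n 1 = b n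
    have h := FormalMultilinearSeries.ofScalars_apply_eq (E := ℂ) b (1:ℂ) n
    simpa using h
  set e₀ : ℕ → ℂ := fun n => if n = 0 then 1 else 0 with he₀
  have h1 : HasFPowerSeriesAt (fun _ : ℂ => (1:ℂ)) (FormalMultilinearSeries.ofScalars ℂ e) 0 := by
    rw [hasFPowerSeriesAt_iff]
    filter_upwards [Metric.ball_mem_nhds (0:ℂ) one_pos] with z hz
    have hz' : ‖z‖ < 1 := by simpa [Metric.mem_ball, dist_zero_right] using hz
    have h := hone z hz'
    have hfun : (fun n : ℕ => z ^ n • (FormalMultilinearSeries.ofScalars ℂ e).coeff n)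
        = fun n => e n * z ^ n := by
      funext n; rw [hcoeff, smul_eq_mul, mul_comm]
    rw [hfun]
    simpa using h
  have h2 : HasFPowerSeriesAt (fun _ : ℂ => (1:ℂ)) (FormalMultilinearSeries.ofScalars ℂ e₀) 0 := by
    rw [hasFPowerSeriesAt_iff]
    filter_upwards with z
    have hsing : HasSum (fun n : ℕ => z ^ n • e₀ n) ((fun n : ℕ => z ^ n • e₀ n) 0) := by
      apply hasSum_single
      intro b hb
      simp [he₀, hb]
    have hval : ((fun n : ℕ => z ^ n • e₀ n) 0) = 1 := by simp [he₀]
    have hfun : (fun n : ℕ => z ^ n • (FormalMultilinearSeries.ofScalars ℂ e₀).coeff n)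
        = fun n : ℕ => z ^ n • e₀ n := by
      funext n; rw [hcoeff]
    rw [hfun]
    simpa [hval, show e₀ 0 = 1 by simp [he₀]] using hsing
  have hee : e = e₀ := by
    have heq := h1.eq_formalMultilinearSeries h2
    exact (FormalMultilinearSeries.ofScalars_series_eq_iff ℂ e e₀).1 heq
  have hps : PowerSeries.mk a * PowerSeries.mk t = 1 := by
    ext n
    rw [PowerSeries.coeff_mul, PowerSeries.coeff_one]
    have h := congrFun hee n
    simp only [he, he₀] at h
    simpa [PowerSeries.coeff_mk] using h
  have hinv : PowerSeries.mk t = (PowerSeries.mk a)⁻¹ := by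
    rw [PowerSeries.eq_inv_iff_mul_eq_one (by simpa using ha0)]
    rw [mul_comm] at hps
    exact hps
  refine ⟨t, fun n => ?_, hpr⟩
  rw [← hinv, PowerSeries.coeff_mk]

lemma antidiag_sum (b : ℕ → ℂ) (z : ℂ) (n : ℕ) :
    ∑ kl ∈ Finset.HasAntidiagonal.antidiagonal n, (b kl.1 * z ^ kl.1) * z ^ kl.2
      = (∑ i ∈ Finset.range (n+1), b i) * z ^ n := by
  have hc : ∀ kl ∈ Finset.HasAntidiagonal.antidiagonal n, (b kl.1 * z ^ kl.1) * z ^ kl.2 = b kl.1 * z ^ n := by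
    intro kl hkl
    rw [Finset.HasAntidiagonal.mem_antidiagonal] at hkl
    rw [mul_assoc, ← pow_add, hkl]
  rw [Finset.sum_congr rfl hc, ← Finset.sum_mul, Finset.Nat.sum_antidiagonal_eq_sum_range_succ_mk]

/-- if `f(q) = ∑ aₙ qⁿ` is analytic and zero-free on the open unit disk,
`cₙ` are the Maclaurin coefficients of `1/f`, `C(n) = c₀ + ⋯ + cₙ`,
`A(n) = a₀ + ⋯ + aₙ`, and `A = lim A(n)/n` exists and is nonzero, then
`∑ C(n) qⁿ → 1/A` as `q → 1⁻` radially. -/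
theorem stmt4 (a c : ℕ → ℂ) (A : ℂ)
    (ha0 : a 0 ≠ 0)
    (hsum : ∀ q : ℂ, ‖q‖ < 1 → Summable (fun n => a n * q ^ n))
    (hzero : ∀ q : ℂ, ‖q‖ < 1 → (∑' n, a n * q ^ n) ≠ 0)
    (hc : ∀ n, c n = PowerSeries.coeff n (PowerSeries.mk a)⁻¹)
    (hA : Tendsto (fun n : ℕ => (∑ i ∈ Finset.range (n + 1), a i) / (n : ℂ))
      atTop (nhds A))
    (hA0 : A ≠ 0) :
    Tendsto (fun q : ℝ => ∑' n : ℕ, (∑ i ∈ Finset.range (n + 1), c i) * (q : ℂ) ^ n)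
      (nhdsWithin 1 (Set.Iio 1)) (nhds (1 / A)) := by
  obtain ⟨t, hct, hpr⟩ := inverse_coeffs a ha0 hsum hzero
  have hcteq : c = t := funext fun n => (hc n).trans (hct n).symm
  -- summability of norms
  have hna := aux_norm_summable hsum
  have hnc := aux_norm_summable (b := t) (fun q hq => (hpr q hq).summable)
  set s : ℕ → ℂ := fun n => ∑ i ∈ Finset.range (n+1), a i with hs
  set d : ℕ → ℂ := fun n => s n - A * n with hd
  have hns : ∀ r : ℝ, 0 ≤ r → r < 1 → Summable (fun n => ‖s n‖ * r ^ n) := by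
    intro r hr0 hr1
    have h1 : Summable fun n => ‖a n * (r:ℂ) ^ n‖ := by
      apply (hna r hr0 hr1).congr
      intro n
      rw [norm_mul, norm_pow, Complex.norm_real, Real.norm_eq_abs, abs_of_nonneg hr0]
    have h2 : Summable fun n => ‖((r:ℂ)) ^ n‖ := by
      have : Summable fun n : ℕ => r ^ n :=
        summable_geometric_of_lt_one hr0 hr1
      apply this.congr
      intro n
      rw [norm_pow, Complex.norm_real, Real.norm_eq_abs, abs_of_nonneg hr0]
    have h3 := (summable_norm_sum_mul_antidiagonal_of_summable_norm h1 h2)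
    have h4 : Summable fun n => ‖s n * (r:ℂ) ^ n‖ := by
      apply h3.congr
      intro n
      congr 1
      exact antidiag_sum a (r:ℂ) n
    apply h4.congr
    intro n
    rw [norm_mul, norm_pow, Complex.norm_real, Real.norm_eq_abs, abs_of_nonneg hr0]
  have hdsum : ∀ r : ℝ, 0 ≤ r → r < 1 → Summable (fun n => ‖d n‖ * r ^ n) := by
    intro r hr0 hr1
    have h1 : Summable fun n : ℕ => ‖s n‖ * r ^ n + ‖A‖ * ((n:ℝ) * r ^ n) := by
      apply (hns r hr0 hr1).add
      have h := (summable_pow_mul_geometric_of_norm_lt_one (R := ℝ) 1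
        (by rw [Real.norm_eq_abs, abs_of_nonneg hr0]; exact hr1)).mul_left ‖A‖
      simpa [pow_one] using h
    apply Summable.of_nonneg_of_le _ _ h1
    · intro n; exact mul_nonneg (norm_nonneg _) (pow_nonneg hr0 n)
    · intro n
      have hb : ‖d n‖ ≤ ‖s n‖ + ‖A‖ * n := by
        rw [hd]
        refine (norm_sub_le _ _).trans ?_
        rw [norm_mul, Complex.norm_natCast]
      have hrn : (0:ℝ) ≤ r ^ n := pow_nonneg hr0 n
      calc ‖d n‖ * r ^ n ≤ (‖s n‖ + ‖A‖ * n) * r ^ n := mul_le_mul_of_nonneg_right hb hrn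
        _ = ‖s n‖ * r ^ n + ‖A‖ * ((n:ℝ) * r ^ n) := by ring
  have hdlim : Tendsto (fun n : ℕ => d n / n) atTop (nhds 0) := by
    have h1 := hA.sub (tendsto_const_nhds (x := A))
    rw [sub_self] at h1
    apply h1.congr'
    filter_upwards [eventually_ge_atTop 1] with n hn
    have hn0 : ((n:ℂ)) ≠ 0 := by exact_mod_cast Nat.one_le_iff_ne_zero.1 hn
    rw [hd]
    field_simp
    ring
  have habel := abel_aux d hdlim hdsum
  -- the limit of (1-q)^2 * ∑ s n q^n is A
  have hlin : Tendsto (fun q : ℝ => A * (q:ℂ)) (nhdsWithin 1 (Set.Iio 1)) (nhds A) := by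
    have h1 : Tendsto (fun q : ℝ => (q:ℂ)) (nhds 1) (nhds 1) :=
      Complex.continuous_ofReal.tendsto' 1 1 rfl
    have h2 := (h1.const_mul A).mono_left (nhdsWithin_le_nhds (s := Set.Iio (1:ℝ)))
    simpa using h2
  have hG : Tendsto (fun q : ℝ => (1 - (q:ℂ))^2 * ∑' n, s n * (q:ℂ) ^ n)
      (nhdsWithin 1 (Set.Iio 1)) (nhds A) := by
    have h := habel.add hlin
    rw [zero_add] at h
    apply h.congr'
    filter_upwards [Ioo_mem_nhdsLT_of_mem (Set.mem_Ioc.2 ⟨zero_lt_one, le_refl (1:ℝ)⟩)]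
      with q hq
    obtain ⟨hq0, hq1⟩ := hq
    set z : ℂ := (q:ℂ) with hz
    have hzn : ‖z‖ < 1 := by
      rw [hz, Complex.norm_real, Real.norm_eq_abs, abs_of_pos hq0]; exact hq1
    have hz1 : (1:ℂ) - z ≠ 0 := by
      intro hcon
      have : z = 1 := by linear_combination -hcon
      rw [this] at hzn; simp at hzn
    have hsd : Summable fun n => d n * z ^ n := by
      have := hdsum q hq0.le hq1
      apply Summable.of_norm
      apply this.congr
      intro n
      rw [norm_mul, norm_pow, hz, Complex.norm_real, Real.norm_eq_abs, abs_of_pos hq0]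
    have hsn : Summable fun n : ℕ => (n:ℂ) * z ^ n :=
      summable_pow_mul_geometric_of_norm_lt_one 1 hzn |>.congr (by intro n; rw [pow_one])
    have hsplit : (∑' n, s n * z ^ n) = (∑' n, d n * z ^ n) + A * (z / (1-z)^2) := by
      have hfun : (fun n => s n * z ^ n) = fun n => d n * z ^ n + A * ((n:ℂ) * z ^ n) := by
        funext n; rw [hd]; ring
      rw [hfun, Summable.tsum_add hsd (hsn.mul_left A), tsum_mul_left]
      congr 1
      rw [tsum_coe_mul_geometric_of_norm_lt_one hzn]
    rw [hsplit]
    have hAz : (1 - z)^2 * (A * (z / (1-z)^2)) = A * z := by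
      field_simp
    rw [mul_add, hAz]
  -- identification of the goal function with the inverse of G
  have hfin := hG.inv₀ hA0
  rw [← one_div] at hfin
  apply hfin.congr'
  filter_upwards [Ioo_mem_nhdsLT_of_mem (Set.mem_Ioc.2 ⟨zero_lt_one, le_refl (1:ℝ)⟩)]
    with q hq
  obtain ⟨hq0, hq1⟩ := hq
  set z : ℂ := (q:ℂ) with hz
  have hzn : ‖z‖ < 1 := by
    rw [hz, Complex.norm_real, Real.norm_eq_abs, abs_of_pos hq0]; exact hq1
  have hz1 : (1:ℂ) - z ≠ 0 := by
    intro hcon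
    have : z = 1 := by linear_combination -hcon
    rw [this] at hzn; simp at hzn
  have hfz : (∑' n, a n * z ^ n) ≠ 0 := hzero z hzn
  -- norm summabilities at z
  have h1 : Summable fun n => ‖a n * z ^ n‖ := by
    apply (hna ‖z‖ (norm_nonneg z) hzn).congr
    intro n; rw [norm_mul, norm_pow]
  have h2 : Summable fun n => ‖t n * z ^ n‖ := by
    apply (hnc ‖z‖ (norm_nonneg z) hzn).congr
    intro n; rw [norm_mul, norm_pow]
  have h3 : Summable fun n => ‖z ^ n‖ := by
    have : Summable fun n : ℕ => ‖z‖ ^ n :=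
      summable_geometric_of_lt_one (norm_nonneg z) hzn
    apply this.congr
    intro n; rw [norm_pow]
  have hgeo : (∑' n : ℕ, z ^ n) = (1 - z)⁻¹ := tsum_geometric_of_norm_lt_one hzn
  -- s-product : ∑ s n z^n = f z * (1-z)⁻¹
  have hsprod : (∑' n, s n * z ^ n) = (∑' n, a n * z ^ n) * (1 - z)⁻¹ := by
    rw [← hgeo, tsum_mul_tsum_eq_tsum_sum_antidiagonal_of_summable_norm h1 h3]
    exact (tsum_congr fun n => antidiag_sum a z n).symm
  -- C-product : goal tsum = (∑ t n z^n) * (1-z)⁻¹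
  have hCprod : (∑' n : ℕ, (∑ i ∈ Finset.range (n + 1), c i) * z ^ n)
      = (∑' n, t n * z ^ n) * (1 - z)⁻¹ := by
    rw [← hgeo, tsum_mul_tsum_eq_tsum_sum_antidiagonal_of_summable_norm h2 h3]
    rw [hcteq]
    exact (tsum_congr fun n => antidiag_sum t z n).symm
  have htz : (∑' n, t n * z ^ n) = (∑' n, a n * z ^ n)⁻¹ := (hpr z hzn).tsum_eq
  -- conclude equality
  show ((1 - z)^2 * ∑' n, s n * z ^ n)⁻¹
      = ∑' n : ℕ, (∑ i ∈ Finset.range (n + 1), c i) * z ^ n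
  rw [hCprod, htz, hsprod]
  rw [show ((1:ℂ) - z)^2 * ((∑' n, a n * z ^ n) * (1 - z)⁻¹)
      = (1 - z) * (∑' n, a n * z ^ n) from by
    field_simp]
  rw [mul_inv]
  ring
end

section
/- Let S ⊆ ℕ have positive arithmetic density d_S > 0, and suppose f_S(q) = 1 + Σ_{n∈S} q^n is analytic and has no zeros on the open unit disk. Then lim_{q→1⁻} Σ_{n≥0} C_S(n) q^n = 1/d_S, where the limit is taken radially. -/
open Filter
open scoped Classical
open Finset
open scoped NNReal



/-- weight of a multiset of parts -/
noncomputable def W (m : Multiset ℕ) : ℚ :=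
  (-1 : ℚ) ^ (Multiset.card m) * (Nat.factorial (Multiset.card m) : ℚ) /
    ∏ i ∈ m.toFinset, (Nat.factorial (m.count i) : ℚ)

/-- multisets of parts of partitions of `n` with parts in `S` -/
noncomputable def M (S : Set ℕ) (n : ℕ) : Finset (Multiset ℕ) :=
  (Finset.univ.filter (fun p : Nat.Partition n => ∀ i ∈ p.parts, i ∈ S)).image
    (fun p => p.parts)

noncomputable def c (S : Set ℕ) (n : ℕ) : ℚ := ∑ m ∈ M S n, W m

lemma mem_M {S : Set ℕ} {n : ℕ} {m : Multiset ℕ} :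
    m ∈ M S n ↔ m.sum = n ∧ ∀ i ∈ m, i ∈ S ∧ 0 < i := by
  constructor
  · rintro hm
    simp only [M, mem_image, mem_filter, mem_univ, true_and] at hm
    obtain ⟨p, hp, rfl⟩ := hm
    exact ⟨p.parts_sum, fun i hi => ⟨hp i hi, p.parts_pos hi⟩⟩
  · rintro ⟨hsum, h⟩
    simp only [M, mem_image, mem_filter, mem_univ, true_and]
    exact ⟨⟨m, fun {i} hi => (h i hi).2, hsum⟩, fun i hi => (h i hi).1, rfl⟩

lemma c_zero (S : Set ℕ) : c S 0 = 1 := by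
  have : M S 0 = {0} := by
    ext m
    simp only [mem_M, mem_singleton]
    constructor
    · rintro ⟨hsum, h⟩
      by_contra hm
      obtain ⟨i, hi⟩ := Multiset.exists_mem_of_ne_zero hm
      have := (h i hi).2
      have hle : i ≤ m.sum := Multiset.le_sum_of_mem hi -- check name
      omega
    · rintro rfl; simp
  simp [c, this, W]


lemma prod_ne_zero (m : Multiset ℕ) :
    (∏ i ∈ m.toFinset, (Nat.factorial (m.count i) : ℚ)) ≠ 0 :=
  Finset.prod_ne_zero_iff.mpr fun i _ => Nat.cast_ne_zero.mpr (Nat.factorial_ne_zero _)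

lemma W_erase {m : Multiset ℕ} {i : ℕ} (hi : i ∈ m) :
    W (m.erase i) = (-1 : ℚ)^(Multiset.card m - 1) * (Nat.factorial (Multiset.card m - 1) : ℚ)
      * (m.count i : ℚ) / ∏ j ∈ m.toFinset, (Nat.factorial (m.count j) : ℚ) := by
  have hcard : Multiset.card (m.erase i) = Multiset.card m - 1 := by
    rw [Multiset.card_erase_of_mem hi]; rfl
  have hsub : (m.erase i).toFinset ⊆ m.toFinset :=
    Multiset.toFinset_subset.mpr (Multiset.erase_subset i m)
  -- extend the product to m.toFinset
  have hprod : (∏ j ∈ (m.erase i).toFinset, (Nat.factorial ((m.erase i).count j) : ℚ))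
      = ∏ j ∈ m.toFinset, (Nat.factorial ((m.erase i).count j) : ℚ) := by
    refine (Finset.prod_subset (f := fun j => (Nat.factorial ((m.erase i).count j) : ℚ)) hsub ?_)
    intro j _ hj
    have : (m.erase i).count j = 0 := by
      rw [Multiset.count_eq_zero]
      intro hmem; exact hj (Multiset.mem_toFinset.mpr hmem)
    show (Nat.factorial (Multiset.count j (m.erase i)) : ℚ) = 1
    rw [this]; simp
  have him : i ∈ m.toFinset := Multiset.mem_toFinset.mpr hi
  have hcount : 1 ≤ m.count i := Multiset.one_le_count_iff_mem.mpr hi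
  -- split off the i factor on both sides
  have key : (∏ j ∈ m.toFinset, (Nat.factorial ((m.erase i).count j) : ℚ)) * (m.count i : ℚ)
      = ∏ j ∈ m.toFinset, (Nat.factorial (m.count j) : ℚ) := by
    rw [← Finset.mul_prod_erase _ _ him, ← Finset.mul_prod_erase _
      (fun j => (Nat.factorial (m.count j) : ℚ)) him]
    have h1 : (m.erase i).count i = m.count i - 1 := Multiset.count_erase_self i m
    have h2 : ∀ j ∈ m.toFinset.erase i, (m.erase i).count j = m.count j := by
      intro j hj
      exact Multiset.count_erase_of_ne (Finset.ne_of_mem_erase hj) m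
    rw [Finset.prod_congr rfl (fun j hj => by rw [h2 j hj] :
      ∀ j ∈ m.toFinset.erase i, ((Nat.factorial ((m.erase i).count j) : ℚ)) = (Nat.factorial (m.count j) : ℚ)), h1]
    have hnat : (m.count i - 1).factorial * m.count i = (m.count i).factorial := by
      rw [mul_comm]; exact Nat.mul_factorial_pred (by omega)
    have : (Nat.factorial (m.count i - 1) : ℚ) * (m.count i : ℚ)
        = (Nat.factorial (m.count i) : ℚ) := by exact_mod_cast congrArg (Nat.cast (R := ℚ)) hnat
    rw [mul_right_comm, this]
  have hne := prod_ne_zero (m.erase i)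
  rw [W, hcard, hprod]
  rw [eq_div_iff (prod_ne_zero m)]
  rw [← key]
  have hne2 : (∏ j ∈ m.toFinset, (Nat.factorial ((m.erase i).count j) : ℚ)) ≠ 0 := by
    rw [← hprod]; exact hne
  field_simp

lemma sum_W_erase {m : Multiset ℕ} (hm : m ≠ 0) :
    ∑ i ∈ m.toFinset, W (m.erase i) = -W m := by
  have hcard : 1 ≤ Multiset.card m := by
    rwa [Nat.one_le_iff_ne_zero, ne_eq, Multiset.card_eq_zero]
  rw [Finset.sum_congr rfl (fun i hi => W_erase (Multiset.mem_toFinset.mp hi))]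
  simp only [div_eq_mul_inv, ← Finset.sum_mul, ← Finset.mul_sum]
  rw [← Nat.cast_sum, Multiset.toFinset_sum_count_eq]
  rw [W, div_eq_mul_inv]
  obtain ⟨k, hk⟩ : ∃ k, Multiset.card m = k + 1 := ⟨Multiset.card m - 1, by omega⟩
  rw [hk]
  simp only [Nat.add_sub_cancel, pow_succ, Nat.factorial_succ]
  push_cast
  ring

lemma key {S : Set ℕ} {n : ℕ} (hn : 0 < n) :
    c S n = -∑ k ∈ (Finset.range n).filter (fun k => (n - k) ∈ S), c S k := by
  have step1 : ∑ k ∈ (Finset.range n).filter (fun k => (n - k) ∈ S), c S k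
      = ∑ x ∈ ((Finset.range n).filter (fun k => (n - k) ∈ S)).sigma (fun k => M S k),
          W x.snd := by
    simp only [c]
    exact Finset.sum_sigma' _ _ _
  have step2 : ∑ m ∈ M S n, ∑ i ∈ m.toFinset, W (m.erase i)
      = ∑ x ∈ (M S n).sigma (fun m => m.toFinset), W (x.fst.erase x.snd) :=
    Finset.sum_sigma' _ _ _
  have step3 : ∑ x ∈ ((Finset.range n).filter (fun k => (n - k) ∈ S)).sigma (fun k => M S k),
      W x.snd = ∑ x ∈ (M S n).sigma (fun m => m.toFinset), W (x.fst.erase x.snd) := by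
    refine Finset.sum_nbij' (fun x => ⟨(n - x.fst) ::ₘ x.snd, n - x.fst⟩)
      (fun x => ⟨n - x.snd, x.fst.erase x.snd⟩) ?_ ?_ ?_ ?_ ?_
    · rintro ⟨k, m⟩ hx
      simp only [Finset.mem_sigma, Finset.mem_filter, Finset.mem_range] at hx ⊢
      obtain ⟨⟨hk, hkS⟩, hm⟩ := hx
      rw [mem_M] at hm
      constructor
      · rw [mem_M]
        refine ⟨?_, ?_⟩
        · rw [Multiset.sum_cons, hm.1]; omega
        · intro i hi
          rcases Multiset.mem_cons.mp hi with h | h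
          · subst h; exact ⟨hkS, by omega⟩
          · exact hm.2 i h
      · simp [Multiset.toFinset_cons]
    · rintro ⟨m, i⟩ hx
      simp only [Finset.mem_sigma, Finset.mem_filter, Finset.mem_range] at hx ⊢
      obtain ⟨hm, hi⟩ := hx
      rw [mem_M] at hm
      have him : i ∈ m := Multiset.mem_toFinset.mp hi
      have hile : i ≤ n := hm.1 ▸ Multiset.le_sum_of_mem him
      have hipos : 0 < i := (hm.2 i him).2
      refine ⟨⟨by omega, ?_⟩, ?_⟩
      · have : n - (n - i) = i := by omega
        rw [this]; exact (hm.2 i him).1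
      · rw [mem_M]
        constructor
        · have : (m.erase i).sum + i = m.sum := by
            rw [add_comm, ← Multiset.sum_cons, Multiset.cons_erase him]
          omega
        · intro j hj
          exact hm.2 j (Multiset.mem_of_mem_erase hj)
    · rintro ⟨k, m⟩ hx
      simp only [Finset.mem_sigma, Finset.mem_filter, Finset.mem_range] at hx
      have hk : k < n := hx.1.1
      have h1 : n - (n - k) = k := by omega
      simp [Multiset.erase_cons_head, h1]
    · rintro ⟨m, i⟩ hx
      simp only [Finset.mem_sigma, Finset.mem_filter, Finset.mem_range] at hx
      obtain ⟨hm, hi⟩ := hx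
      rw [mem_M] at hm
      have him : i ∈ m := Multiset.mem_toFinset.mp hi
      have hile : i ≤ n := hm.1 ▸ Multiset.le_sum_of_mem him
      have : n - (n - i) = i := by omega
      simp only [this]
      congr 1
      exact Multiset.cons_erase him
    · rintro ⟨k, m⟩ _
      simp [Multiset.erase_cons_head]
  have step4 : ∑ m ∈ M S n, ∑ i ∈ m.toFinset, W (m.erase i) = -c S n := by
    rw [Finset.sum_congr rfl (fun m hm => sum_W_erase ?_), c, Finset.sum_neg_distrib]
    rw [mem_M] at hm
    intro h0
    subst h0
    simp at hm
    omega
  rw [step1, step3, ← step2, step4, neg_neg]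

/-- The alternating partition sum `C_S(n)` over partitions with all parts in `S`
and size at most `n`. -/
noncomputable def CS (S : Set ℕ) (n : ℕ) : ℚ :=
  ∑ j ∈ Finset.range (n + 1),
    ∑ p ∈ Finset.univ.filter (fun p : Nat.Partition j => ∀ i ∈ p.parts, i ∈ S),
      ((-1 : ℚ) ^ p.parts.card * (Nat.factorial p.parts.card : ℚ) /
        ∏ i ∈ Finset.Icc 1 n, (Nat.factorial (p.parts.count i) : ℚ))

lemma CS_eq (S : Set ℕ) (n : ℕ) : CS S n = ∑ j ∈ Finset.range (n + 1), c S j := by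
  unfold CS
  refine Finset.sum_congr rfl (fun j hj => ?_)
  have hjn : j ≤ n := by simpa [Nat.lt_succ_iff] using Finset.mem_range.mp hj
  rw [c, M, Finset.sum_image]
  · refine Finset.sum_congr rfl (fun p hp => ?_)
    rw [W]
    congr 1
    refine (Finset.prod_subset ?_ ?_).symm
    · intro i hi
      have him : i ∈ p.parts := Multiset.mem_toFinset.mp hi
      have h1 : 0 < i := p.parts_pos him
      have h2 : i ≤ j := p.parts_sum ▸ Multiset.le_sum_of_mem him
      exact Finset.mem_Icc.mpr ⟨h1, le_trans h2 hjn⟩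
    · intro i _ hi
      have : p.parts.count i = 0 := by
        rw [Multiset.count_eq_zero]
        intro hmem; exact hi (Multiset.mem_toFinset.mpr hmem)
      rw [this]; simp
  · intro p _ q _ hpq
    exact Nat.Partition.ext hpq

noncomputable def aa (S : Set ℕ) (m : ℕ) : ℚ := if m = 0 then 1 else if m ∈ S then 1 else 0

lemma conv (S : Set ℕ) (n : ℕ) :
    ∑ k ∈ Finset.range (n + 1), c S k * aa S (n - k) = if n = 0 then 1 else 0 := by
  rcases Nat.eq_zero_or_pos n with rfl | hn
  · simp [c_zero, aa]
  · rw [if_neg (by omega), Finset.sum_range_succ, Nat.sub_self]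
    have h0 : aa S 0 = 1 := by simp [aa]
    rw [h0, mul_one]
    have : ∀ k ∈ Finset.range n, c S k * aa S (n - k)
        = if (n - k) ∈ S then c S k else 0 := by
      intro k hk
      have : n - k ≠ 0 := by have := Finset.mem_range.mp hk; omega
      rw [aa, if_neg this]
      split <;> simp
    rw [Finset.sum_congr rfl this, ← Finset.sum_filter, key hn]
    ring


section Abel
variable (S : Set ℕ)

noncomputable def ar (n : ℕ) : ℝ := if n = 0 then 1 else if n ∈ S then 1 else 0

noncomputable def AN (N : ℕ) : ℝ := ∑ n ∈ Finset.range (N + 1), ar S n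

lemma ar_nonneg (n : ℕ) : 0 ≤ ar S n := by unfold ar; split <;> [norm_num; split <;> norm_num]

lemma ar_le_one (n : ℕ) : ar S n ≤ 1 := by unfold ar; split <;> [norm_num; split <;> norm_num]

lemma AN_nonneg (N : ℕ) : 0 ≤ AN S N := Finset.sum_nonneg fun n _ => ar_nonneg S n

lemma AN_le (N : ℕ) : AN S N ≤ N + 1 := by
  calc AN S N ≤ ∑ _n ∈ Finset.range (N + 1), (1:ℝ) :=
        Finset.sum_le_sum fun n _ => ar_le_one S n
    _ = N + 1 := by simp

lemma summable_ar_mul {q : ℝ} (hq : |q| < 1) : Summable (fun n => ar S n * q ^ n) := by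
  refine Summable.of_norm_bounded (summable_geometric_of_lt_one (abs_nonneg q) hq) ?_
  intro n
  rw [norm_mul, norm_pow, Real.norm_eq_abs, Real.norm_eq_abs]
  calc |ar S n| * |q| ^ n ≤ 1 * |q| ^ n := by
        refine mul_le_mul_of_nonneg_right ?_ (by positivity)
        rw [abs_of_nonneg (ar_nonneg S n)]; exact ar_le_one S n
    _ = |q| ^ n := one_mul _

lemma summable_AN_mul {q : ℝ} (hq : |q| < 1) : Summable (fun N => AN S N * q ^ N) := by
  refine Summable.of_norm_bounded
    (((summable_pow_mul_geometric_of_norm_lt_one (r := |q|) 1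
        (by rwa [Real.norm_eq_abs, abs_abs])).add
      (summable_geometric_of_lt_one (abs_nonneg q) hq))) ?_
  intro n
  rw [norm_mul, norm_pow, Real.norm_eq_abs, Real.norm_eq_abs,
    abs_of_nonneg (AN_nonneg S n)]
  have := AN_le S n
  calc AN S n * |q| ^ n ≤ ((n : ℝ) + 1) * |q| ^ n := by
        exact mul_le_mul_of_nonneg_right this (by positivity)
    _ = (n : ℝ) ^ 1 * |q| ^ n + |q| ^ n := by ring

set_option maxHeartbeats 1000000 in
lemma abel_identity {q : ℝ} (hq : |q| < 1) :
    (1 - q) * ∑' N, AN S N * q ^ N = ∑' n, ar S n * q ^ n := by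
  have hu : Summable (fun N => AN S N * q ^ N) := summable_AN_mul S hq
  have hu1 : Summable (fun N => AN S N * q ^ (N + 1)) := by
    have := hu.mul_right q
    refine this.congr fun N => by ring
  have har : Summable (fun n => ar S n * q ^ n) := summable_ar_mul S hq
  have hshift : (∑' N, AN S (N + 1) * q ^ (N + 1)) = ∑' N, AN S N * q ^ N - ar S 0 := by
    rw [Summable.tsum_eq_zero_add hu]
    have h0 : AN S 0 * q ^ 0 = ar S 0 := by simp [AN]
    rw [h0]; ring
  have hAN1 : ∀ N, AN S (N + 1) * q ^ (N + 1)
      = AN S N * q ^ (N + 1) + ar S (N + 1) * q ^ (N + 1) := by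
    intro N
    rw [AN, Finset.sum_range_succ]
    show (AN S N + ar S (N+1)) * _ = _
    ring
  have har1 : Summable (fun N => ar S (N + 1) * q ^ (N + 1)) :=
    (summable_nat_add_iff 1).mpr har
  have hsum1 : Summable (fun N => AN S (N+1) * q ^ (N+1)) := (summable_nat_add_iff 1).mpr hu
  have key : (∑' N, AN S N * q ^ (N + 1)) + (∑' N, ar S (N + 1) * q ^ (N + 1))
      = ∑' N, AN S N * q ^ N - ar S 0 := by
    rw [← hshift, ← Summable.tsum_add hu1 har1]
    exact tsum_congr fun N => (hAN1 N).symm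
  have hq1 : (∑' N, AN S N * q ^ (N + 1)) = q * ∑' N, AN S N * q ^ N := by
    rw [← tsum_mul_left]
    exact tsum_congr fun N => by ring
  have har0 : (∑' n, ar S n * q ^ n) = ar S 0 + ∑' N, ar S (N + 1) * q ^ (N + 1) := by
    rw [Summable.tsum_eq_zero_add har]
    simp
  rw [har0]
  have := key
  rw [hq1] at this
  linarith [this]

end Abel

section Limit
variable {S : Set ℕ}

lemma AN_eq_card (hS0 : (0:ℕ) ∉ S) (N : ℕ) :
    AN S N = 1 + (((Finset.range (N + 1)).filter (fun n => n ∈ S)).card : ℝ) := by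
  unfold AN
  have h1 : ∀ n, ar S n = (if n ∈ S then (1:ℝ) else 0) + (if n = 0 then (1:ℝ) else 0) := by
    intro n
    unfold ar
    rcases eq_or_ne n 0 with rfl | hn
    · simp [hS0]
    · simp [hn]
  rw [Finset.sum_congr rfl (fun n _ => h1 n), Finset.sum_add_distrib]
  rw [Finset.sum_boole, Finset.sum_ite_eq' (Finset.range (N+1)) 0 (fun _ => (1:ℝ))]
  simp [add_comm]

lemma summable_e_aux {q : ℝ} (hq : |q| < 1) (d : ℝ) :
    Summable (fun N => (AN S N - d * N) * q ^ N) := by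
  have h1 : Summable (fun N : ℕ => d * ((N:ℝ)^1 * q ^ N)) :=
    (summable_pow_mul_geometric_of_norm_lt_one 1 (by rwa [Real.norm_eq_abs])).mul_left d
  exact ((summable_AN_mul S hq).sub h1).congr fun N => by push_cast; ring

lemma tendsto_aux (e : ℕ → ℝ) (he : Tendsto (fun N => e N / N) atTop (nhds 0))
    (hsum : ∀ q : ℝ, q ∈ Set.Ioo 0 1 → Summable (fun N => |e N| * q ^ N)) :
    Tendsto (fun q : ℝ => (1 - q)^2 * ∑' N, e N * q ^ N)
      (nhdsWithin 1 (Set.Iio 1)) (nhds 0) := by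
  rw [NormedAddCommGroup.tendsto_nhds_zero]
  intro ε hε
  obtain ⟨N₀', hN₀⟩ := (Metric.tendsto_atTop.mp he (ε/4) (by positivity))
  set N₀ : ℕ := max N₀' 1 with hN₁def
  set C : ℝ := 1 + ∑ k ∈ Finset.range N₀, |e k| with hC
  have hCpos : 0 < C := by
    have : (0:ℝ) ≤ ∑ k ∈ Finset.range N₀, |e k| :=
      Finset.sum_nonneg fun k _ => abs_nonneg _
    linarith
  have hbound : ∀ N, |e N| ≤ C + (ε/4) * N := by
    intro N
    rcases lt_or_ge N N₀ with h | h
    · have h1 : |e N| ≤ ∑ k ∈ Finset.range N₀, |e k| :=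
        Finset.single_le_sum (f := fun k => |e k|) (fun k _ => abs_nonneg _)
          (Finset.mem_range.mpr h)
      have : (0:ℝ) ≤ (ε/4) * N := by positivity
      linarith
    · have hN1 : 1 ≤ N := le_trans (le_max_right _ _) h
      have := hN₀ N (le_trans (le_max_left _ _) h)
      rw [Real.dist_eq, sub_zero] at this
      have hNpos : (0:ℝ) < N := by exact_mod_cast hN1
      have : |e N| ≤ (ε/4) * N := by
        rw [abs_div] at this
        have h2 : |e N| / |(N:ℝ)| < ε/4 := this
        rw [abs_of_pos hNpos] at h2
        calc |e N| = |e N| / N * N := by field_simp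
          _ ≤ (ε/4) * N := by
              exact mul_le_mul_of_nonneg_right (le_of_lt h2) (le_of_lt hNpos)
      linarith
  set δ : ℝ := min (ε/(4*C)) 1 with hδ
  have hδpos : 0 < δ := lt_min (by positivity) one_pos
  filter_upwards [Ioo_mem_nhdsLT_of_mem (show (1:ℝ) ∈ Set.Ioc (1-δ) 1 from
    ⟨by linarith, le_refl 1⟩)] with q hq
  obtain ⟨hq1, hq2⟩ := hq
  have hq0 : 0 < q := by
    have : 1 - δ ≥ 0 := by
      have : δ ≤ 1 := min_le_right _ _
      linarith
    linarith
  have hqabs : |q| < 1 := by rw [abs_of_pos hq0]; exact hq2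
  have h1q : 0 < 1 - q := by linarith
  -- tsum bound
  have hsum1 : Summable (fun N => |e N| * q ^ N) := hsum q ⟨hq0, hq2⟩
  have hsum2 : Summable (fun N : ℕ => (C + (ε/4) * (N:ℝ)) * q ^ N) := by
    have ha : Summable (fun N : ℕ => C * q ^ N) :=
      (summable_geometric_of_lt_one (le_of_lt hq0) hq2).mul_left C
    have hb : Summable (fun N : ℕ => (ε/4) * ((N:ℝ) * q ^ N)) := by
      refine Summable.mul_left _ ?_
      have := summable_pow_mul_geometric_of_norm_lt_one (r := q) 1
        (by rwa [Real.norm_eq_abs])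
      exact this.congr fun N => by push_cast; ring
    refine (ha.add hb).congr fun N => ?_
    show C * q ^ N + ε / 4 * ((N:ℝ) * q ^ N) = (C + ε / 4 * (N:ℝ)) * q ^ N
    ring
  have htsum_le : |∑' N : ℕ, e N * q ^ N| ≤ C * (1-q)⁻¹ + (ε/4) * (q / (1-q)^2) := by
    have step1 : |∑' N : ℕ, e N * q ^ N| ≤ ∑' N : ℕ, |e N| * q ^ N := by
      have := norm_tsum_le_tsum_norm (f := fun N : ℕ => e N * q ^ N) ?_
      · simpa [Real.norm_eq_abs, abs_mul, abs_of_pos hq0] using this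
      · refine hsum1.congr fun N => ?_
        rw [Real.norm_eq_abs, abs_mul, abs_of_pos (pow_pos hq0 _)]
    have step2 : ∑' N : ℕ, |e N| * q ^ N ≤ ∑' N : ℕ, (C + (ε/4) * (N:ℝ)) * q ^ N := by
      refine Summable.tsum_le_tsum (fun N => ?_) hsum1 hsum2
      exact mul_le_mul_of_nonneg_right (hbound N) (le_of_lt (pow_pos hq0 _))
    have step3 : ∑' N : ℕ, (C + (ε/4) * (N:ℝ)) * q ^ N
        = C * (1-q)⁻¹ + (ε/4) * (q / (1-q)^2) := by
      rw [show (fun N : ℕ => (C + (ε/4) * (N:ℝ)) * q ^ N)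
          = (fun N : ℕ => C * q ^ N + (ε/4) * ((N:ℝ) * q ^ N)) from funext fun N => by ring]
      rw [Summable.tsum_add ((summable_geometric_of_lt_one (le_of_lt hq0) hq2).mul_left C)
        (by
          refine Summable.mul_left _ ?_
          have := summable_pow_mul_geometric_of_norm_lt_one (r := q) 1
            (by rwa [Real.norm_eq_abs])
          exact this.congr fun N => by push_cast; ring)]
      rw [tsum_mul_left, tsum_mul_left, tsum_geometric_of_lt_one (le_of_lt hq0) hq2,
        tsum_coe_mul_geometric_of_norm_lt_one (by rwa [Real.norm_eq_abs])]
    linarith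
  rw [Real.norm_eq_abs, abs_mul, abs_of_nonneg (by positivity : (0:ℝ) ≤ (1-q)^2)]
  have hfinal : (1-q)^2 * |∑' N, e N * q ^ N|
      ≤ (1-q)^2 * (C * (1-q)⁻¹ + (ε/4) * (q / (1-q)^2)) :=
    mul_le_mul_of_nonneg_left htsum_le (by positivity)
  have heq : (1-q)^2 * (C * (1-q)⁻¹ + (ε/4) * (q / (1-q)^2))
      = C * (1-q) + (ε/4) * q := by
    field_simp
  have hlt1 : C * (1-q) < ε/4 := by
    have hδle : δ ≤ ε/(4*C) := min_le_left _ _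
    have : 1 - q < δ := by linarith
    calc C * (1-q) < C * δ := by
          exact mul_lt_mul_of_pos_left this hCpos
      _ ≤ C * (ε/(4*C)) := mul_le_mul_of_nonneg_left hδle (le_of_lt hCpos)
      _ = ε/4 := by field_simp
  have hlt2 : (ε/4) * q ≤ ε/4 := by
    nlinarith
  calc (1-q)^2 * |∑' N, e N * q ^ N| ≤ C * (1-q) + (ε/4) * q := by rw [← heq]; exact hfinal
    _ < ε/4 + ε/4 := by linarith
    _ < ε := by linarith

end Limit

section Assemble
variable {S : Set ℕ}

lemma summable_ite_pow {q : ℝ} (hq : |q| < 1) :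
    Summable (fun n : ℕ => if n ∈ S then q ^ n else 0) := by
  refine Summable.of_norm_bounded (summable_geometric_of_lt_one (abs_nonneg q) hq) ?_
  intro n
  rw [Real.norm_eq_abs]
  split
  · rw [abs_pow]
  · simp [abs_nonneg, pow_nonneg]
  

lemma fr_eq (hS0 : (0:ℕ) ∉ S) {q : ℝ} (hq : |q| < 1) :
    1 + (∑' n : ℕ, if n ∈ S then q ^ n else 0) = ∑' n : ℕ, ar S n * q ^ n := by
  have h1 : ∀ n : ℕ, ar S n * q ^ n
      = (if n ∈ S then q ^ n else 0) + (if n = 0 then (1:ℝ) else 0) := by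
    intro n
    rcases eq_or_ne n 0 with rfl | hn
    · simp [ar, hS0]
    · rw [ar, if_neg hn]
      split <;> simp
  rw [tsum_congr h1, Summable.tsum_add (summable_ite_pow hq) ⟨1, hasSum_ite_eq 0 1⟩,
    (hasSum_ite_eq 0 (1:ℝ)).tsum_eq]
  ring

lemma abel_real (hS0 : (0:ℕ) ∉ S) (d : ℝ)
    (hd : Tendsto
      (fun N : ℕ => (((Finset.range (N + 1)).filter (fun n => n ∈ S)).card : ℝ) / N)
      atTop (nhds d)) :
    Tendsto (fun q : ℝ => (1 - q) * (1 + ∑' n : ℕ, if n ∈ S then q ^ n else 0))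
      (nhdsWithin 1 (Set.Iio 1)) (nhds d) := by
  set e : ℕ → ℝ := fun N => AN S N - d * N with he_def
  have he : Tendsto (fun N => e N / N) atTop (nhds 0) := by
    have h1 : ∀ᶠ N : ℕ in atTop, e N / N
        = 1 / N + ((((Finset.range (N + 1)).filter (fun n => n ∈ S)).card : ℝ) / N - d) := by
      filter_upwards [eventually_ge_atTop 1] with N hN
      have hNpos : (0:ℝ) < N := by exact_mod_cast hN
      rw [he_def]
      simp only
      rw [AN_eq_card hS0]
      field_simp
      ring
    rw [tendsto_congr' h1]
    have h2 : Tendsto (fun N : ℕ => 1 / (N:ℝ)) atTop (nhds 0) :=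
      tendsto_one_div_atTop_nhds_zero_nat
    have h3 : Tendsto
        (fun N : ℕ => (((Finset.range (N + 1)).filter (fun n => n ∈ S)).card : ℝ) / N - d)
        atTop (nhds 0) := by
      simpa using hd.sub_const d
    simpa using h2.add h3
  have hsum : ∀ q : ℝ, q ∈ Set.Ioo 0 1 → Summable (fun N => |e N| * q ^ N) := by
    rintro q ⟨hq0, hq1⟩
    have hqabs : |q| < 1 := by rwa [abs_of_pos hq0]
    have h1 : Summable (fun N : ℕ => ((N:ℝ) + 1 + |d| * N) * q ^ N) := by
      have ha := summable_pow_mul_geometric_of_norm_lt_one (r := q) 1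
        (by rwa [Real.norm_eq_abs])
      have hb : Summable (fun N : ℕ => q ^ N) :=
        summable_geometric_of_lt_one (le_of_lt hq0) hq1
      have hc := ha.mul_left |d|
      refine ((ha.add hb).add hc).congr fun N => ?_
      show (N:ℝ) ^ 1 * q ^ N + q ^ N + |d| * ((N:ℝ) ^ 1 * q ^ N) = _
      ring
    refine Summable.of_nonneg_of_le (fun N => by positivity) (fun N => ?_) h1
    have : |e N| ≤ (N:ℝ) + 1 + |d| * N := by
      rw [he_def]
      simp only
      calc |AN S N - d * N| ≤ |AN S N| + |d * N| := abs_sub _ _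
        _ ≤ ((N:ℝ) + 1) + |d| * N := by
            rw [abs_mul, abs_of_nonneg (AN_nonneg S N), Nat.abs_cast]
            exact add_le_add (AN_le S N) (le_refl _)
        _ = (N:ℝ) + 1 + |d| * N := by ring
    exact mul_le_mul_of_nonneg_right this (le_of_lt (pow_pos hq0 _))
  have hmain := (tendsto_aux e he hsum).add
    ((tendsto_id.mono_left nhdsWithin_le_nhds).const_mul d)
  rw [zero_add, mul_one] at hmain
  refine hmain.congr' ?_
  filter_upwards [Ioo_mem_nhdsLT_of_mem (show (1:ℝ) ∈ Set.Ioc 0 1 from ⟨one_pos, le_refl 1⟩)]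
    with q hq
  obtain ⟨hq0, hq1⟩ := hq
  have hqabs : |q| < 1 := by rwa [abs_of_pos hq0]
  have h1q : (1:ℝ) - q ≠ 0 := by intro h; linarith
  have hdN : Summable (fun N : ℕ => d * ((N:ℝ) * q ^ N)) := by
    refine Summable.mul_left _ ?_
    have := summable_pow_mul_geometric_of_norm_lt_one (r := q) 1 (by rwa [Real.norm_eq_abs])
    exact this.congr fun N => by push_cast; ring
  have hsplit : ∑' N : ℕ, AN S N * q ^ N
      = (∑' N : ℕ, e N * q ^ N) + d * (q / (1-q)^2) := by
    have : ∑' N : ℕ, AN S N * q ^ N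
        = (∑' N : ℕ, e N * q ^ N) + ∑' N : ℕ, d * ((N:ℝ) * q ^ N) := by
      rw [← Summable.tsum_add (summable_e_aux hqabs d) hdN]
      exact tsum_congr fun N => by show AN S N * q ^ N = (AN S N - d * N) * q ^ N + _; ring
    rw [this, tsum_mul_left,
      tsum_coe_mul_geometric_of_norm_lt_one (by rwa [Real.norm_eq_abs])]
  have habel := abel_identity S hqabs
  calc (1 - q)^2 * (∑' N : ℕ, e N * q ^ N) + d * q
      = (1-q)^2 * ((∑' N : ℕ, e N * q ^ N) + d * (q / (1-q)^2)) := by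
        field_simp
    _ = (1-q)^2 * ∑' N : ℕ, AN S N * q ^ N := by rw [← hsplit]
    _ = (1-q) * ((1-q) * ∑' N : ℕ, AN S N * q ^ N) := by ring
    _ = (1-q) * ∑' n : ℕ, ar S n * q ^ n := by rw [habel]
    _ = (1 - q) * (1 + ∑' n : ℕ, if n ∈ S then q ^ n else 0) := by rw [fr_eq hS0 hqabs]

end Assemble


section Cx
variable {S : Set ℕ}

noncomputable def Ac (S : Set ℕ) (n : ℕ) : ℂ := if n = 0 then 1 else if n ∈ S then 1 else 0

noncomputable def fc (S : Set ℕ) (z : ℂ) : ℂ := 1 + ∑' n : ℕ, if n ∈ S then z ^ n else 0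

lemma csummable_ite {z : ℂ} (hz : ‖z‖ < 1) :
    Summable (fun n : ℕ => if n ∈ S then z ^ n else 0) := by
  refine Summable.of_norm_bounded (summable_geometric_of_lt_one (norm_nonneg z) hz) ?_
  intro n
  split
  · rw [norm_pow]
  · simp [norm_nonneg, pow_nonneg]

lemma norm_Ac_le (n : ℕ) : ‖Ac S n‖ ≤ 1 := by
  unfold Ac; split
  · simp
  · split <;> simp

lemma hasSum_fc (hS0 : (0:ℕ) ∉ S) {z : ℂ} (hz : ‖z‖ < 1) :
    HasSum (fun n : ℕ => Ac S n * z ^ n) (fc S z) := by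
  have h1 : ∀ n : ℕ, Ac S n * z ^ n
      = (if n ∈ S then z ^ n else 0) + (if n = 0 then (1:ℂ) else 0) := by
    intro n
    rcases eq_or_ne n 0 with rfl | hn
    · simp [Ac, hS0]
    · rw [Ac, if_neg hn, if_neg hn]
      split <;> simp
  rw [funext h1]
  have h2 := (csummable_ite (S := S) hz).hasSum
  have h3 : HasSum (fun n : ℕ => if n = 0 then (1:ℂ) else 0) 1 := hasSum_ite_eq 0 1
  have := h2.add h3
  rwa [fc, add_comm] 

noncomputable def Fc (S : Set ℕ) : FormalMultilinearSeries ℂ ℂ ℂ :=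
  FormalMultilinearSeries.ofScalars ℂ (Ac S)

lemma Fc_radius : 1 ≤ (Fc S).radius := by
  have := FormalMultilinearSeries.le_radius_of_bound (Fc S) 1 (r := 1) ?_
  · simpa using this
  · intro n
    rw [Fc, FormalMultilinearSeries.ofScalars_norm]
    simpa using norm_Ac_le (S := S) n

lemma hFc (hS0 : (0:ℕ) ∉ S) : HasFPowerSeriesOnBall (fc S) (Fc S) 0 1 := by
  constructor
  · exact Fc_radius
  · norm_num
  · intro y hy
    rw [mem_emetric_ball_zero_iff] at hy
    have hy' : ‖y‖ < 1 := by rw [enorm_eq_nnnorm] at hy; exact_mod_cast hy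
    have := hasSum_fc hS0 hy'
    rw [zero_add]
    refine this.congr_fun fun n => ?_
    rw [Fc, FormalMultilinearSeries.ofScalars_apply_eq]
    rw [smul_eq_mul]

lemma fc_differentiableOn (hS0 : (0:ℕ) ∉ S) :
    DifferentiableOn ℂ (fc S) (Metric.ball 0 1) := by
  intro z hz
  rw [Metric.mem_ball, dist_zero_right] at hz
  have : AnalyticAt ℂ (fc S) z := by
    refine (hFc hS0).analyticAt_of_mem ?_
    rw [mem_emetric_ball_zero_iff, enorm_eq_nnnorm]
    exact_mod_cast hz
  exact this.differentiableAt.differentiableWithinAt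

end Cx

section Inv
variable {S : Set ℕ} (hS0 : (0:ℕ) ∉ S)
  (hzero : ∀ q : ℂ, ‖q‖ < 1 → fc S q ≠ 0)

include hS0 hzero in
lemma hinv_diff : DifferentiableOn ℂ (fun z => (fc S z)⁻¹) (Metric.ball 0 1) := by
  refine DifferentiableOn.inv (fc_differentiableOn hS0) ?_
  intro z hz
  rw [Metric.mem_ball, dist_zero_right] at hz
  exact hzero z hz

noncomputable def Pinv (S : Set ℕ) : FormalMultilinearSeries ℂ ℂ ℂ :=
  cauchyPowerSeries (fun z => (fc S z)⁻¹) 0 ((2:ℝ)⁻¹)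

include hS0 hzero in
lemma hPinv_at (r : ℝ≥0) (hr0 : 0 < r) (hr1 : (r:ℝ) < 1) :
    HasFPowerSeriesOnBall (fun z => (fc S z)⁻¹) (Pinv S) 0 r := by
  have hsub : ∀ (s : ℝ≥0), (s:ℝ) < 1 →
      Metric.closedBall (0:ℂ) s ⊆ Metric.ball 0 1 := fun s hs =>
    Metric.closedBall_subset_ball hs
  have H : ∀ (s : ℝ≥0), 0 < s → (s:ℝ) < 1 → HasFPowerSeriesOnBall
      (fun z => (fc S z)⁻¹) (cauchyPowerSeries (fun z => (fc S z)⁻¹) 0 s) 0 s :=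
    fun s hs0 hs1 =>
      DifferentiableOn.hasFPowerSeriesOnBall ((hinv_diff hS0 hzero).mono (hsub s hs1)) hs0
  have h2 := H ((2:ℝ≥0)⁻¹) (by norm_num) (by norm_num)
  have hr := H r hr0 hr1
  have heq := hr.hasFPowerSeriesAt.eq_formalMultilinearSeries h2.hasFPowerSeriesAt
  have hcast : (((2:ℝ≥0)⁻¹ : ℝ≥0) : ℝ) = (2:ℝ)⁻¹ := by norm_num
  show HasFPowerSeriesOnBall _ (cauchyPowerSeries (fun z => (fc S z)⁻¹) 0 ((2:ℝ)⁻¹)) 0 r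
  rw [← hcast, ← heq]
  exact hr

include hS0 hzero in
lemma hPinv_hasSum {z : ℂ} (hz : ‖z‖ < 1) :
    HasSum (fun n => (Pinv S).coeff n * z ^ n) ((fc S z)⁻¹) := by
  set r : ℝ≥0 := ⟨(‖z‖ + 1) / 2, by positivity⟩ with hrdef
  have hr0 : 0 < r := by
    rw [← NNReal.coe_lt_coe]
    show (0:ℝ) < (‖z‖ + 1) / 2
    positivity
  have hr1 : (r:ℝ) < 1 := by
    show (‖z‖ + 1) / 2 < 1
    linarith
  have hzr : ‖z‖ < (r:ℝ) := by
    show ‖z‖ < (‖z‖ + 1) / 2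
    linarith
  have H := hPinv_at hS0 hzero r hr0 hr1
  have hmem : z ∈ Metric.eball (0:ℂ) r := by
    rw [mem_emetric_ball_zero_iff, enorm_eq_nnnorm]
    exact_mod_cast hzr
  have := H.hasSum hmem
  rw [zero_add] at this
  refine this.congr_fun fun n => ?_
  rw [FormalMultilinearSeries.apply_eq_pow_smul_coeff, smul_eq_mul, mul_comm]

include hS0 hzero in
lemma hPinv_radius : 1 ≤ (Pinv S).radius := by
  refine ENNReal.le_of_forall_nnreal_lt fun r hr => ?_
  rcases eq_or_ne r 0 with rfl | hr0
  · simp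
  · exact (hPinv_at hS0 hzero r (pos_iff_ne_zero.mpr hr0) (by exact_mod_cast hr)).r_le

lemma norm_coeff_le (p : FormalMultilinearSeries ℂ ℂ ℂ) (n : ℕ) : ‖p.coeff n‖ ≤ ‖p n‖ :=
  le_of_eq (FormalMultilinearSeries.norm_apply_eq_norm_coef).symm

include hS0 hzero in
lemma summable_coeff_mul {r : ℝ≥0} (hr : (r:ℝ) < 1) :
    Summable (fun n => ‖(Pinv S).coeff n‖ * (r:ℝ) ^ n) := by
  have hlt : (r : ENNReal) < (Pinv S).radius :=
    lt_of_lt_of_le (by exact_mod_cast hr) (hPinv_radius hS0 hzero)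
  refine Summable.of_nonneg_of_le (fun n => by positivity) (fun n => ?_)
    ((Pinv S).summable_norm_mul_pow hlt)
  exact mul_le_mul_of_nonneg_right (norm_coeff_le _ n) (by positivity)

end Inv

section Conv
variable {S : Set ℕ} (hS0 : (0:ℕ) ∉ S)
  (hzero : ∀ q : ℂ, ‖q‖ < 1 → fc S q ≠ 0)

include hS0 hzero in
set_option maxHeartbeats 1000000 in
lemma hasSum_u {z : ℂ} (hz : ‖z‖ < 2⁻¹) :
    HasSum (fun n => (∑ kl ∈ Finset.HasAntidiagonal.antidiagonal n,
      (Pinv S).coeff kl.1 * Ac S kl.2) * z ^ n) 1 := by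
  have hz1 : ‖z‖ < 1 := lt_trans hz (by norm_num)
  have hb : Summable (fun n => ‖(Pinv S).coeff n * z ^ n‖) := by
    refine (summable_coeff_mul hS0 hzero (r := ‖z‖₊) ?_).congr fun n => ?_
    · exact_mod_cast hz1
    · rw [norm_mul, norm_pow]
      norm_cast
  have hA : Summable (fun n => ‖Ac S n * z ^ n‖) := by
    refine Summable.of_nonneg_of_le (fun n => norm_nonneg _) (fun n => ?_)
      (summable_geometric_of_lt_one (norm_nonneg z) hz1)
    rw [norm_mul, norm_pow]
    calc ‖Ac S n‖ * ‖z‖ ^ n ≤ 1 * ‖z‖ ^ n :=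
          mul_le_mul_of_nonneg_right (norm_Ac_le n) (by positivity)
      _ = ‖z‖ ^ n := one_mul _
  have hprod := tsum_mul_tsum_eq_tsum_sum_antidiagonal_of_summable_norm
    (f := fun n => (Pinv S).coeff n * z ^ n) (g := fun n => Ac S n * z ^ n) hb hA
  have h1 : (∑' n, (Pinv S).coeff n * z ^ n) = (fc S z)⁻¹ :=
    (hPinv_hasSum hS0 hzero hz1).tsum_eq
  have h2 : (∑' n, Ac S n * z ^ n) = fc S z := (hasSum_fc hS0 hz1).tsum_eq
  have hprod' : (1:ℂ) = ∑' n, ∑ kl ∈ Finset.HasAntidiagonal.antidiagonal n,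
      ((Pinv S).coeff kl.1 * z ^ kl.1) * (Ac S kl.2 * z ^ kl.2) := by
    calc (1:ℂ) = (fc S z)⁻¹ * fc S z := (inv_mul_cancel₀ (hzero z hz1)).symm
      _ = (∑' n, (Pinv S).coeff n * z ^ n) * ∑' n, Ac S n * z ^ n := by rw [h1, h2]
      _ = _ := hprod
  have hsummable : Summable (fun n => ∑ kl ∈ Finset.HasAntidiagonal.antidiagonal n,
      ((Pinv S).coeff kl.1 * z ^ kl.1) * (Ac S kl.2 * z ^ kl.2)) := by
    refine Summable.of_norm ?_
    exact summable_norm_sum_mul_antidiagonal_of_summable_norm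
      (f := fun n => (Pinv S).coeff n * z ^ n) (g := fun n => Ac S n * z ^ n) hb hA
  have hcongr : ∀ n, (∑ kl ∈ Finset.HasAntidiagonal.antidiagonal n,
      ((Pinv S).coeff kl.1 * z ^ kl.1) * (Ac S kl.2 * z ^ kl.2))
      = (∑ kl ∈ Finset.HasAntidiagonal.antidiagonal n, (Pinv S).coeff kl.1 * Ac S kl.2) * z ^ n := by
    intro n
    rw [Finset.sum_mul]
    refine Finset.sum_congr rfl fun kl hkl => ?_
    have : kl.1 + kl.2 = n := Finset.HasAntidiagonal.mem_antidiagonal.mp hkl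
    rw [← this, pow_add]
    ring
  have hfinal : HasSum (fun n => ∑ kl ∈ Finset.HasAntidiagonal.antidiagonal n,
      ((Pinv S).coeff kl.1 * z ^ kl.1) * (Ac S kl.2 * z ^ kl.2)) 1 := by
    rw [hprod']
    exact hsummable.hasSum
  exact (hfinal.congr_fun fun n => (hcongr n).symm)

include hS0 hzero in
lemma u_eq_delta : ∀ n, (∑ kl ∈ Finset.HasAntidiagonal.antidiagonal n, (Pinv S).coeff kl.1 * Ac S kl.2)
    = if n = 0 then 1 else 0 := by
  set u : ℕ → ℂ := fun n => ∑ kl ∈ Finset.HasAntidiagonal.antidiagonal n, (Pinv S).coeff kl.1 * Ac S kl.2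
    with hu
  -- bound on u
  obtain ⟨Cb, hCb⟩ : ∃ Cb : ℝ, ∀ k, ‖(Pinv S).coeff k‖ * (2:ℝ)⁻¹ ^ k ≤ Cb := by
    refine ⟨∑' k, ‖(Pinv S).coeff k‖ * ((⟨2⁻¹, by norm_num⟩ : ℝ≥0):ℝ) ^ k, fun k => ?_⟩
    have hs := summable_coeff_mul hS0 hzero (r := ⟨2⁻¹, by norm_num⟩) (by show (2:ℝ)⁻¹ < 1; norm_num)
    have := Summable.le_tsum hs k (fun j _ => by exact mul_nonneg (norm_nonneg _) (pow_nonneg (NNReal.coe_nonneg _) _))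
    exact this
  have hCb0 : 0 ≤ Cb := le_trans (by positivity) (hCb 0)
  have hub : ∀ n, ‖u n‖ ≤ 2 * Cb * 2 ^ n := by
    intro n
    calc ‖u n‖ ≤ ∑ kl ∈ Finset.HasAntidiagonal.antidiagonal n, ‖(Pinv S).coeff kl.1 * Ac S kl.2‖ :=
          norm_sum_le _ _
      _ ≤ ∑ kl ∈ Finset.HasAntidiagonal.antidiagonal n, Cb * 2 ^ kl.1 := by
          refine Finset.sum_le_sum fun kl _ => ?_
          rw [norm_mul]
          calc ‖(Pinv S).coeff kl.1‖ * ‖Ac S kl.2‖ ≤ ‖(Pinv S).coeff kl.1‖ * 1 :=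
                mul_le_mul_of_nonneg_left (norm_Ac_le _) (norm_nonneg _)
            _ = ‖(Pinv S).coeff kl.1‖ := mul_one _
            _ ≤ Cb * 2 ^ kl.1 := by
                have := hCb kl.1
                rw [← le_div_iff₀ (by positivity)] at this
                calc ‖(Pinv S).coeff kl.1‖ ≤ Cb / (2:ℝ)⁻¹ ^ kl.1 := this
                  _ = Cb * 2 ^ kl.1 := by
                      rw [div_eq_mul_inv, ← inv_pow, inv_inv]
      _ = ∑ k ∈ Finset.range (n+1), Cb * 2 ^ k := by
          rw [Finset.Nat.sum_antidiagonal_eq_sum_range_succ_mk]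
      _ ≤ 2 * Cb * 2 ^ n := by
          rw [← Finset.mul_sum]
          have : (∑ k ∈ Finset.range (n+1), (2:ℝ) ^ k) = 2 ^ (n+1) - 1 := by
            have := geom_sum_eq (show (2:ℝ) ≠ 1 by norm_num) (n+1)
            rw [this]; norm_num
          rw [this]
          have : (2:ℝ) ^ (n+1) - 1 ≤ 2 * 2 ^ n := by
            rw [pow_succ]; nlinarith [pow_pos (show (0:ℝ) < 2 by norm_num) n]
          nlinarith [pow_pos (show (0:ℝ) < 2 by norm_num) n]
  -- power series for constant 1 with coefficients u
  have hou : HasFPowerSeriesOnBall (fun _ : ℂ => (1:ℂ))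
      (FormalMultilinearSeries.ofScalars ℂ u) 0 (ENNReal.ofNNReal ⟨4⁻¹, by norm_num⟩) := by
    constructor
    · refine FormalMultilinearSeries.le_radius_of_bound _ (2 * Cb) fun n => ?_
      rw [FormalMultilinearSeries.ofScalars_norm]
      calc ‖u n‖ * ((⟨4⁻¹, by norm_num⟩ : ℝ≥0) : ℝ) ^ n ≤ (2 * Cb * 2 ^ n) * 4⁻¹ ^ n := by
            refine mul_le_mul (hub n) ?_ (by positivity) (by positivity)
            norm_num
        _ = 2 * Cb * 2⁻¹ ^ n := by
            rw [mul_assoc, ← mul_pow]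
            norm_num
        _ ≤ 2 * Cb * 1 := by
            refine mul_le_mul_of_nonneg_left ?_ (by positivity)
            exact pow_le_one₀ (by norm_num) (by norm_num)
        _ = 2 * Cb := mul_one _
    · exact ENNReal.coe_pos.mpr (show (0:ℝ≥0) < ⟨4⁻¹, by norm_num⟩ from by
        exact NNReal.coe_pos.mp (by show (0:ℝ) < 4⁻¹; norm_num))
    · intro y hy
      rw [mem_emetric_ball_zero_iff, enorm_eq_nnnorm] at hy
      have hy' : ‖y‖ < 2⁻¹ := by
        have : (‖y‖₊ : ℝ) < ((⟨4⁻¹, by norm_num⟩ : ℝ≥0) : ℝ) := NNReal.coe_lt_coe.mpr (ENNReal.coe_lt_coe.mp hy)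
        have h4 : ((⟨4⁻¹, by norm_num⟩ : ℝ≥0) : ℝ) = 4⁻¹ := rfl
        rw [h4] at this
        have : ‖y‖ < 4⁻¹ := by exact_mod_cast this
        linarith
      have := hasSum_u hS0 hzero hy'
      refine this.congr_fun fun n => ?_
      rw [FormalMultilinearSeries.ofScalars_apply_eq, smul_eq_mul]
  have hod : HasFPowerSeriesOnBall (fun _ : ℂ => (1:ℂ))
      (FormalMultilinearSeries.ofScalars ℂ (fun n => if n = 0 then (1:ℂ) else 0)) 0
      (ENNReal.ofNNReal ⟨4⁻¹, by norm_num⟩) := by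
    constructor
    · refine FormalMultilinearSeries.le_radius_of_bound _ 1 fun n => ?_
      rw [FormalMultilinearSeries.ofScalars_norm]
      rcases eq_or_ne n 0 with rfl | hn
      · simp
      · rw [if_neg hn]
        simp [pow_nonneg]
    · exact ENNReal.coe_pos.mpr (show (0:ℝ≥0) < ⟨4⁻¹, by norm_num⟩ from by
        exact NNReal.coe_pos.mp (by show (0:ℝ) < 4⁻¹; norm_num))
    · intro y _
      have h3 : HasSum (fun n : ℕ => if n = 0 then (1:ℂ) else 0) 1 := hasSum_ite_eq 0 1
      refine h3.congr_fun fun n => ?_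
      rw [FormalMultilinearSeries.ofScalars_apply_eq]
      rcases eq_or_ne n 0 with rfl | hn
      · simp
      · simp [hn]
  have := hou.hasFPowerSeriesAt.eq_formalMultilinearSeries hod.hasFPowerSeriesAt
  have hinj := FormalMultilinearSeries.ofScalars_series_injective (𝕜 := ℂ) (E := ℂ) this
  intro n
  exact congrFun hinj n

end Conv

section Glue
variable {S : Set ℕ} (hS0 : (0:ℕ) ∉ S)
  (hzero : ∀ q : ℂ, ‖q‖ < 1 → fc S q ≠ 0)

lemma Ac_cast (m : ℕ) : Ac S m = ((aa S m : ℚ) : ℂ) := by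
  rw [Ac, aa]
  split_ifs <;> simp

include hS0 hzero in
lemma coeff_eq_c : ∀ n, (Pinv S).coeff n = ((c S n : ℚ) : ℂ) := by
  intro n
  induction n using Nat.strong_induction_on with
  | _ n ih =>
    have hu := u_eq_delta hS0 hzero n
    rw [Finset.Nat.sum_antidiagonal_eq_sum_range_succ_mk] at hu
    have hc : (∑ k ∈ Finset.range (n+1), ((c S k : ℚ):ℂ) * Ac S (n - k))
        = if n = 0 then 1 else 0 := by
      calc ∑ k ∈ Finset.range (n+1), ((c S k : ℚ):ℂ) * Ac S (n - k)
          = ∑ k ∈ Finset.range (n+1), ((c S k * aa S (n - k) : ℚ) : ℂ) := by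
            refine Finset.sum_congr rfl fun k _ => ?_
            rw [Ac_cast]
            push_cast
            ring
        _ = (((∑ k ∈ Finset.range (n+1), c S k * aa S (n - k)) : ℚ) : ℂ) := by
            rw [Rat.cast_sum]
        _ = (((if n = 0 then 1 else 0 : ℚ)) : ℂ) := by rw [conv]
        _ = if n = 0 then 1 else 0 := by split <;> simp
    rw [Finset.sum_range_succ] at hu hc
    have hAc0 : Ac S (n - n) = 1 := by simp [Ac]
    rw [hAc0, mul_one] at hu hc
    have hsum_eq : ∑ k ∈ Finset.range n, (Pinv S).coeff k * Ac S (n - k)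
        = ∑ k ∈ Finset.range n, ((c S k : ℚ):ℂ) * Ac S (n - k) :=
      Finset.sum_congr rfl fun k hk => by rw [ih k (Finset.mem_range.mp hk)]
    rw [hsum_eq] at hu
    have := hu.trans hc.symm
    exact add_left_cancel this

include hS0 hzero in
lemma hasSum_c {z : ℂ} (hz : ‖z‖ < 1) :
    HasSum (fun n => ((c S n : ℚ):ℂ) * z ^ n) ((fc S z)⁻¹) := by
  refine (hPinv_hasSum hS0 hzero hz).congr_fun fun n => ?_
  rw [coeff_eq_c hS0 hzero]

include hS0 hzero in
lemma hasSum_CS_complex {z : ℂ} (hz : ‖z‖ < 1) :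
    HasSum (fun n => ((CS S n : ℚ):ℂ) * z ^ n) ((fc S z)⁻¹ * (1 - z)⁻¹) := by
  have hb : Summable (fun n => ‖((c S n : ℚ):ℂ) * z ^ n‖) := by
    refine (summable_coeff_mul hS0 hzero (r := ‖z‖₊) (by exact_mod_cast hz)).congr fun n => ?_
    rw [← coeff_eq_c hS0 hzero, norm_mul, norm_pow]
    norm_cast
  have hg : Summable (fun n => ‖z ^ n‖) := by
    refine Summable.congr (summable_geometric_of_lt_one (norm_nonneg z) hz) fun n => ?_
    rw [norm_pow]
  have hprod := tsum_mul_tsum_eq_tsum_sum_antidiagonal_of_summable_norm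
    (f := fun n => ((c S n : ℚ):ℂ) * z ^ n) (g := fun n => z ^ n) hb hg
  have h1 : (∑' n, ((c S n : ℚ):ℂ) * z ^ n) = (fc S z)⁻¹ := (hasSum_c hS0 hzero hz).tsum_eq
  have h2 : (∑' n : ℕ, z ^ n) = (1 - z)⁻¹ := tsum_geometric_of_norm_lt_one hz
  have hcongr : ∀ n : ℕ, (∑ kl ∈ Finset.HasAntidiagonal.antidiagonal n,
      (((c S kl.1 : ℚ):ℂ) * z ^ kl.1) * z ^ kl.2) = ((CS S n : ℚ):ℂ) * z ^ n := by
    intro n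
    have hCS : ((CS S n : ℚ):ℂ) = ∑ k ∈ Finset.range (n+1), ((c S k : ℚ):ℂ) := by
      rw [CS_eq, Rat.cast_sum]
    rw [hCS, Finset.sum_mul, Finset.Nat.sum_antidiagonal_eq_sum_range_succ_mk]
    refine Finset.sum_congr rfl fun k hk => ?_
    have hkn : k ≤ n := Nat.lt_succ_iff.mp (Finset.mem_range.mp hk)
    rw [mul_assoc, ← pow_add]
    congr 2
    omega
  have hsummable : Summable (fun n => ∑ kl ∈ Finset.HasAntidiagonal.antidiagonal n,
      (((c S kl.1 : ℚ):ℂ) * z ^ kl.1) * z ^ kl.2) := by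
    refine Summable.of_norm ?_
    exact summable_norm_sum_mul_antidiagonal_of_summable_norm
      (f := fun n => ((c S n : ℚ):ℂ) * z ^ n) (g := fun n => z ^ n) hb hg
  have hval : (∑' n : ℕ, ∑ kl ∈ Finset.HasAntidiagonal.antidiagonal n,
      (((c S kl.1 : ℚ):ℂ) * z ^ kl.1) * z ^ kl.2) = (fc S z)⁻¹ * (1 - z)⁻¹ := by
    rw [← hprod, h1, h2]
  have := hsummable.hasSum
  rw [hval] at this
  exact this.congr_fun fun n => (hcongr n).symm

include hS0 hzero in
lemma tsum_CS_real {q : ℝ} (hq0 : -1 < q) (hq1 : q < 1) :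
    (∑' n : ℕ, (CS S n : ℝ) * q ^ n) = (((1 - (q:ℂ)) * fc S q)⁻¹).re := by
  have hznorm : ‖(q:ℂ)‖ < 1 := by
    rw [Complex.norm_real, Real.norm_eq_abs, abs_lt]
    exact ⟨hq0, hq1⟩
  have hcs := hasSum_CS_complex hS0 hzero hznorm
  have hre := Complex.reCLM.hasSum hcs
  have hcongr : ∀ n : ℕ, Complex.reCLM (((CS S n : ℚ):ℂ) * (q:ℂ) ^ n)
      = (CS S n : ℝ) * q ^ n := by
    intro n
    have : ((CS S n : ℚ):ℂ) * (q:ℂ) ^ n = (((CS S n : ℝ) * q ^ n : ℝ) : ℂ) := by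
      push_cast
      ring
    rw [this]
    exact Complex.ofReal_re _
  have := (hre.congr_fun fun n => (hcongr n).symm).tsum_eq
  rw [this]
  congr 1
  rw [mul_inv_rev]
  rfl

end Glue

/-- if `S` has positive arithmetic density `d` and
`f_S(q) = 1 + ∑_{n ∈ S} qⁿ` is zero-free on the open unit disk, then
`∑ C_S(n) qⁿ → 1/d` as `q → 1⁻` radially. -/
theorem stmt5 (S : Set ℕ) (hS : ∀ m ∈ S, 0 < m) (d : ℝ)
    (hd : Tendsto
      (fun N : ℕ => (((Finset.range (N + 1)).filter (fun n => n ∈ S)).card : ℝ) / N)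
      atTop (nhds d))
    (hdpos : 0 < d)
    (hzero : ∀ q : ℂ, ‖q‖ < 1 →
      (1 + ∑' n : ℕ, (if n ∈ S then q ^ n else 0)) ≠ 0) :
    Tendsto (fun q : ℝ => ∑' n : ℕ, (CS S n : ℝ) * q ^ n)
      (nhdsWithin 1 (Set.Iio 1)) (nhds (1 / d)) := by
  have hS0 : (0:ℕ) ∉ S := fun h => absurd (hS 0 h) (lt_irrefl 0)
  have hzero' : ∀ q : ℂ, ‖q‖ < 1 → fc S q ≠ 0 := fun q hq => by
    rw [fc]; exact hzero q hq
  -- the limit of (1 - q) * fc q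
  have habel := abel_real hS0 d hd
  have hcab : Tendsto (fun q : ℝ => (1 - (q:ℂ)) * fc S q)
      (nhdsWithin 1 (Set.Iio 1)) (nhds (d:ℂ)) := by
    have hcast : ∀ q : ℝ, (1 - (q:ℂ)) * fc S q
        = (((1 - q) * (1 + ∑' n : ℕ, if n ∈ S then q ^ n else 0) : ℝ) : ℂ) := by
      intro q
      rw [fc]
      push_cast
      congr 2
      refine tsum_congr fun n => ?_
      split <;> push_cast <;> ring
    rw [funext hcast]
    exact (Complex.continuous_ofReal.continuousAt).tendsto.comp habel
  have hd0 : (d:ℂ) ≠ 0 := by exact_mod_cast ne_of_gt hdpos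
  have hinv : Tendsto (fun q : ℝ => ((1 - (q:ℂ)) * fc S q)⁻¹)
      (nhdsWithin 1 (Set.Iio 1)) (nhds ((d:ℂ)⁻¹)) := hcab.inv₀ hd0
  have hre : Tendsto (fun q : ℝ => (((1 - (q:ℂ)) * fc S q)⁻¹).re)
      (nhdsWithin 1 (Set.Iio 1)) (nhds (1/d)) := by
    have hcont := (Complex.continuous_re.continuousAt
      (x := (d:ℂ)⁻¹)).tendsto.comp hinv
    have : ((d:ℂ)⁻¹).re = 1/d := by
      rw [← Complex.ofReal_inv, Complex.ofReal_re, one_div]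
    rwa [this] at hcont
  refine hre.congr' ?_
  filter_upwards [Ioo_mem_nhdsLT_of_mem
    (show (1:ℝ) ∈ Set.Ioc 0 1 from ⟨one_pos, le_refl 1⟩)] with q hq
  exact (tsum_CS_real hS0 hzero' (by linarith [hq.1]) hq.2).symm
end

section
/- Frobenius/Abel-type limit: let f(q) = Σ_{n≥0} a_n q^n with a_n ∈ ℂ, and suppose A := lim_{N→∞} (1/N) Σ_{n=0}^{N−1} a_n exists. Then f converges on |q| < 1 and lim_{q→1⁻} (1 − q) f(q) = A, with q → 1 along the real axis. -/
open Filter Finset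

lemma aux_summable19 {𝕜 : Type*} [NormedField 𝕜] [CompleteSpace 𝕜]
    {b : ℕ → 𝕜} {C : ℝ} (hb : ∀ n, ‖b n‖ ≤ C * (n+1)) {q : 𝕜} (hq : ‖q‖ < 1) :
    Summable (fun n => b n * q ^ n) := by
  have hq' : ‖(‖q‖)‖ < 1 := by simpa using hq
  have h1 : Summable (fun n : ℕ => C * (((n:ℝ) + 1) * ‖q‖ ^ n)) := by
    apply Summable.mul_left
    have := (summable_pow_mul_geometric_of_norm_lt_one (R := ℝ) 1 hq').add
      (summable_geometric_of_norm_lt_one hq')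
    convert this using 2 with n
    · rfl
    push_cast; ring
  apply Summable.of_norm_bounded h1
  intro n
  rw [norm_mul, norm_pow]
  calc ‖b n‖ * ‖q‖ ^ n ≤ (C * (n+1)) * ‖q‖ ^ n :=
        mul_le_mul_of_nonneg_right (hb n) (pow_nonneg (norm_nonneg q) n)
    _ = C * (((n:ℝ)+1) * ‖q‖ ^ n) := by ring

lemma aux_geom19 {𝕜 : Type*} [NormedField 𝕜] [CompleteSpace 𝕜] {q : 𝕜} (hq : ‖q‖ < 1) :
    ∑' n : ℕ, ((n : 𝕜) + 1) * q ^ n = ((1 - q) ^ 2)⁻¹ := by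
  have h1 : (1 : 𝕜) - q ≠ 0 := by
    intro h
    have : q = 1 := by linear_combination -h
    simp [this] at hq
  have h2 : Summable (fun n : ℕ => (n : 𝕜) * q ^ n) :=
    summable_pow_mul_geometric_of_norm_lt_one 1 hq |>.congr (by simp)
  have h3 : Summable (fun n : ℕ => q ^ n) := summable_geometric_of_norm_lt_one hq
  have : ∑' n : ℕ, ((n : 𝕜) + 1) * q ^ n = ∑' n : ℕ, ((n:𝕜) * q ^ n + q ^ n) := by
    congr 1; ext n; ring
  rw [this, Summable.tsum_add h2 h3, tsum_coe_mul_geometric_of_norm_lt_one hq,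
    tsum_geometric_of_norm_lt_one hq]
  field_simp
  ring

lemma aux_Csum19 {a : ℕ → ℂ} {C : ℝ}
    (hS : ∀ N : ℕ, ‖∑ n ∈ Finset.range N, a n‖ ≤ C * N) (n : ℕ) :
    ‖∑ k ∈ Finset.range (n+1), a k‖ ≤ C * (n + 1) := by
  simpa using hS (n + 1)

lemma aux_id19 (a : ℕ → ℂ) {C : ℝ}
    (hS : ∀ N : ℕ, ‖∑ n ∈ Finset.range N, a n‖ ≤ C * N) {q : ℂ} (hq : ‖q‖ < 1) :
    ∑' n : ℕ, a n * q ^ n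
      = (1 - q) * ∑' n : ℕ, (∑ k ∈ Finset.range (n + 1), a k) * q ^ n := by
  set S : ℕ → ℂ := fun N => ∑ n ∈ Finset.range N, a n with hSdef
  have hg : Summable (fun n : ℕ => S (n + 1) * q ^ n) := aux_summable19 (aux_Csum19 hS) hq
  have hh : Summable (fun n : ℕ => S n * q ^ n) := by
    apply aux_summable19 (C := C) _ hq
    intro n
    calc ‖S n‖ ≤ C * n := hS n
      _ ≤ C * (n + 1) := by
          by_cases hc : 0 ≤ C
          · nlinarith
          · exfalso
            have := (norm_nonneg (S 1)).trans (hS 1)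
            simp at this; exact hc this
  have key : ∑' n : ℕ, S n * q ^ n = ∑' n : ℕ, S (n + 1) * q ^ (n + 1) := by
    rw [Summable.tsum_eq_zero_add hh]
    simp [S]
  rw [sub_mul, one_mul, ← tsum_mul_left (a := q)]
  have : (fun n : ℕ => q * (S (n+1) * q ^ n)) = fun n : ℕ => S (n + 1) * q ^ (n + 1) := by
    ext n; ring
  rw [this, ← key, ← Summable.tsum_sub hg hh]
  congr 1
  ext n
  have : S (n + 1) = S n + a n := Finset.sum_range_succ a n
  rw [this]
  ring

lemma aux_wsummable19 (A : ℂ) {q : ℂ} (hq : ‖q‖ < 1) :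
    Summable (fun n : ℕ => (((n:ℂ)+1) * A) * q ^ n) := by
  apply aux_summable19 (C := ‖A‖) _ hq
  intro n
  rw [norm_mul]
  have : ‖(n:ℂ)+1‖ = (n:ℝ)+1 := by
    rw [show ((n:ℂ)+1) = ((n+1:ℕ):ℂ) by push_cast; ring, Complex.norm_natCast]
    push_cast; ring
  rw [this]; ring_nf; rfl

lemma aux_formula19 (a : ℕ → ℂ) (A : ℂ) {C : ℝ}
    (hS : ∀ N : ℕ, ‖∑ n ∈ Finset.range N, a n‖ ≤ C * N) {q : ℂ} (hq : ‖q‖ < 1) :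
    (1 - q) * (∑' n : ℕ, a n * q ^ n) - A
      = (1 - q)^2 * ∑' n : ℕ, ((∑ k ∈ Finset.range (n+1), a k) - ((n:ℂ)+1) * A) * q ^ n := by
  have h1q : (1:ℂ) - q ≠ 0 := by
    intro h
    have : q = 1 := by linear_combination -h
    simp [this] at hq
  set S : ℕ → ℂ := fun N => ∑ n ∈ Finset.range N, a n with hSdef
  have hg : Summable (fun n : ℕ => S (n + 1) * q ^ n) := aux_summable19 (aux_Csum19 hS) hq
  have hw : Summable (fun n : ℕ => (((n:ℂ)+1) * A) * q ^ n) := aux_wsummable19 A hq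
  rw [aux_id19 a hS hq]
  have hsplit : ∑' n : ℕ, (S (n+1) - ((n:ℂ)+1) * A) * q ^ n
      = (∑' n : ℕ, S (n+1) * q ^ n) - ∑' n : ℕ, (((n:ℂ)+1) * A) * q ^ n := by
    rw [← Summable.tsum_sub hg hw]
    congr 1; ext n; ring
  rw [hsplit]
  have hwval : ∑' n : ℕ, (((n:ℂ)+1) * A) * q ^ n = A * ((1 - q)^2)⁻¹ := by
    have : (fun n : ℕ => (((n:ℂ)+1) * A) * q ^ n) = fun n : ℕ => A * (((n:ℂ)+1) * q ^ n) := by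
      ext n; ring
    rw [this, tsum_mul_left, aux_geom19 hq]
  rw [hwval]
  have hpow : ((1:ℂ) - q)^2 ≠ 0 := pow_ne_zero _ h1q
  field_simp
  ring

lemma aux_bound19 (a : ℕ → ℂ) (A : ℂ)
    (hA : Filter.Tendsto (fun N : ℕ => (∑ n ∈ Finset.range N, a n) / (N : ℂ)) Filter.atTop (nhds A)) :
    ∃ C : ℝ, 0 ≤ C ∧ ∀ N : ℕ, ‖∑ n ∈ Finset.range N, a n‖ ≤ C * N := by
  obtain ⟨C, hC⟩ := hA.norm.bddAbove_range
  refine ⟨max C 0, le_max_right _ _, fun N => ?_⟩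
  rcases Nat.eq_zero_or_pos N with h | h
  · simp [h]
  · have h1 : ‖(∑ n ∈ Finset.range N, a n) / (N:ℂ)‖ ≤ C := hC ⟨N, rfl⟩
    have hN : (0:ℝ) < N := by exact_mod_cast h
    rw [norm_div, Complex.norm_natCast, div_le_iff₀ hN] at h1
    calc ‖∑ n ∈ Finset.range N, a n‖ ≤ C * N := h1
      _ ≤ max C 0 * N := by gcongr; exact le_max_left _ _

set_option maxHeartbeats 1000000 in
/-- Frobenius: if the Cesàro means of `(aₙ)` converge to `A`, then
`f(q) = ∑ aₙ qⁿ` converges on the open unit disk and `(1 - q) f(q) → A` as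
`q → 1⁻` along the reals. -/
theorem stmt19 (a : ℕ → ℂ) (A : ℂ)
    (hA : Tendsto (fun N : ℕ => (∑ n ∈ Finset.range N, a n) / (N : ℂ))
      atTop (nhds A)) :
    (∀ q : ℂ, ‖q‖ < 1 → Summable (fun n => a n * q ^ n)) ∧
      Tendsto (fun q : ℝ => ((1 - q : ℝ) : ℂ) * ∑' n : ℕ, a n * (q : ℂ) ^ n)
        (nhdsWithin 1 (Set.Iio 1)) (nhds A) := by
  obtain ⟨C, hC0, hS⟩ := aux_bound19 a A hA
  set S : ℕ → ℂ := fun N => ∑ n ∈ Finset.range N, a n with hSdef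
  have ha_bound : ∀ n : ℕ, ‖a n‖ ≤ (2 * C) * (n + 1) := by
    intro n
    have h1 : a n = S (n+1) - S n := by
      simp only [S, Finset.sum_range_succ]; ring
    rw [h1]
    calc ‖S (n+1) - S n‖ ≤ ‖S (n+1)‖ + ‖S n‖ := norm_sub_le _ _
      _ ≤ C * (n+1) + C * n := by
          gcongr
          · simpa using hS (n+1)
          · exact hS n
      _ ≤ (2 * C) * (n + 1) := by nlinarith
  refine ⟨fun q hq => aux_summable19 ha_bound hq, ?_⟩
  -- T n bound eventually
  set T : ℕ → ℂ := fun n => S (n+1) - ((n:ℂ)+1) * A with hTdef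
  have hTbound : ∀ n : ℕ, ‖T n‖ ≤ (C + ‖A‖) * (n + 1) := by
    intro n
    calc ‖S (n+1) - ((n:ℂ)+1) * A‖ ≤ ‖S (n+1)‖ + ‖((n:ℂ)+1) * A‖ := norm_sub_le _ _
      _ ≤ C * (n+1) + ((n:ℝ)+1) * ‖A‖ := by
          gcongr
          · simpa using hS (n+1)
          · rw [norm_mul, show ((n:ℂ)+1) = ((n+1:ℕ):ℂ) by push_cast; ring,
              Complex.norm_natCast]
            push_cast
            exact le_refl _
      _ = (C + ‖A‖) * (n + 1) := by ring
  have hTsmall : ∀ ε : ℝ, 0 < ε → ∃ N : ℕ, ∀ n ≥ N, ‖T n‖ ≤ ε * (n + 1) := by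
    intro ε hε
    have h1 : Tendsto (fun n : ℕ => S (n+1) / ((n:ℂ)+1)) atTop (nhds A) := by
      have h2 := hA.comp (tendsto_add_atTop_nat 1)
      have : (fun N : ℕ => S N / (N:ℂ)) ∘ (fun n => n + 1)
          = fun n : ℕ => S (n+1) / ((n:ℂ)+1) := by
        ext n; simp [Function.comp]
      rwa [this] at h2
    rw [Metric.tendsto_atTop] at h1
    obtain ⟨N, hN⟩ := h1 ε hε
    refine ⟨N, fun n hn => ?_⟩
    have h3 := (hN n hn).le
    rw [dist_eq_norm] at h3
    have hne : ((n:ℂ)+1) ≠ 0 := by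
      have : (0:ℝ) < (n:ℝ) + 1 := by positivity
      intro h; apply this.ne'
      have := congrArg Complex.re h; simpa using this
    have h4 : T n = ((n:ℂ)+1) * (S (n+1) / ((n:ℂ)+1) - A) := by
      simp only [T]
      field_simp
    rw [h4, norm_mul, show ((n:ℂ)+1) = ((n+1:ℕ):ℂ) by push_cast; ring,
      Complex.norm_natCast]
    push_cast
    calc ((n:ℝ)+1) * ‖S (n+1) / ((n:ℂ)+1) - A‖ ≤ ((n:ℝ)+1) * ε := by
          gcongr
      _ = ε * ((n:ℝ)+1) := by ring
  -- main epsilon-delta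
  rw [Metric.tendsto_nhdsWithin_nhds]
  intro ε hε
  obtain ⟨N, hN⟩ := hTsmall (ε/4) (by positivity)
  obtain ⟨B, hB0, hBdef⟩ : ∃ B : ℝ, 0 ≤ B ∧ B = ∑ i ∈ Finset.range N, ‖T i‖ :=
    ⟨_, Finset.sum_nonneg fun i _ => norm_nonneg _, rfl⟩
  refine ⟨min (1/2) (ε/(4*(B+1))), by positivity, ?_⟩
  intro q hq hdist
  have hq1 : q < 1 := hq
  have hdlt : 1 - q < min (1/2) (ε/(4*(B+1))) := by
    rw [Real.dist_eq] at hdist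
    have : |q - 1| = 1 - q := by rw [abs_of_nonpos (by linarith)]; ring
    linarith [this ▸ hdist]
  have hqhalf : 1/2 < q := by
    have := hdlt.trans_le (min_le_left _ _); linarith
  have hq0 : 0 < q := by linarith
  have habs : |q| < 1 := by rw [abs_of_pos hq0]; exact hq1
  have hqc : ‖(q:ℂ)‖ < 1 := by rwa [Complex.norm_real, Real.norm_eq_abs]
  -- apply formula
  have hform := aux_formula19 a A hS hqc
  have hcast : ((1 - q : ℝ) : ℂ) = 1 - (q:ℂ) := by push_cast; ring
  rw [dist_eq_norm, hcast, hform]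
  -- norm estimates
  have hTsum : Summable (fun n : ℕ => ‖T n‖ * q ^ n) := by
    have : Summable (fun n : ℕ => ((‖T n‖ : ℝ)) * (q:ℝ) ^ n) :=
      aux_summable19 (b := fun n => (‖T n‖ : ℝ)) (C := C + ‖A‖)
        (fun n => by rw [Real.norm_eq_abs, abs_of_nonneg (norm_nonneg _)]; exact hTbound n)
        (by rwa [Real.norm_eq_abs])
    exact this
  have hTCsum : Summable (fun n : ℕ => T n * (q:ℂ) ^ n) :=
    aux_summable19 hTbound hqc
  have hnorm_le : ‖∑' n : ℕ, T n * (q:ℂ) ^ n‖ ≤ ∑' n : ℕ, ‖T n‖ * q ^ n := by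
    have := norm_tsum_le_tsum_norm (f := fun n : ℕ => T n * (q:ℂ) ^ n) ?_
    · refine this.trans_eq ?_
      congr 1; ext n
      rw [norm_mul, norm_pow, Complex.norm_real, Real.norm_eq_abs, abs_of_pos hq0]
    · refine hTsum.congr fun n => ?_
      rw [norm_mul, norm_pow, Complex.norm_real, Real.norm_eq_abs, abs_of_pos hq0]
  -- split tsum at N
  have hGsum : Summable (fun n : ℕ => ((n:ℝ)+1) * q ^ n) := by
    have : Summable (fun n : ℕ => (((n:ℝ)+1) : ℝ) * (q:ℝ) ^ n) :=
      aux_summable19 (b := fun n : ℕ => ((n:ℝ)+1)) (C := 1)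
        (fun n => by
          rw [Real.norm_eq_abs, abs_of_nonneg (by positivity)]
          show ((n:ℝ)+1) ≤ 1 * ((n:ℝ)+1); linarith)
        (by rwa [Real.norm_eq_abs])
    exact this
  have hsplit := (Summable.sum_add_tsum_nat_add (f := fun n : ℕ => ‖T n‖ * q ^ n) N hTsum).symm
  have htail : ∑' n : ℕ, ‖T (n + N)‖ * q ^ (n + N) ≤ (ε/4) * ((1-q)^2)⁻¹ := by
    have h1 : ∑' n : ℕ, ‖T (n + N)‖ * q ^ (n + N)
        ≤ ∑' n : ℕ, (ε/4) * (((n + N : ℕ):ℝ)+1) * q ^ (n + N) := by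
      apply Summable.tsum_le_tsum
      · intro n
        have := hN (n + N) (Nat.le_add_left _ _)
        have hp : (0:ℝ) ≤ q ^ (n + N) := by positivity
        calc ‖T (n+N)‖ * q ^ (n+N) ≤ ((ε/4) * ((n+N:ℕ)+1)) * q ^ (n+N) := by
              apply mul_le_mul_of_nonneg_right _ hp
              convert this using 2 <;> push_cast <;> ring
          _ = (ε/4) * (((n + N : ℕ):ℝ)+1) * q ^ (n + N) := by push_cast; ring
      · exact (summable_nat_add_iff N).2 hTsum
      · have := (summable_nat_add_iff N).2 hGsum
        apply (this.mul_left (ε/4)).congr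
        intro n; push_cast; ring
    have h2 : ∑' n : ℕ, (ε/4) * (((n + N : ℕ):ℝ)+1) * q ^ (n + N)
        = (ε/4) * ∑' n : ℕ, (((n + N : ℕ):ℝ)+1) * q ^ (n + N) := by
      rw [← tsum_mul_left]; congr 1; ext n; ring
    have h3 : ∑' n : ℕ, (((n + N : ℕ):ℝ)+1) * q ^ (n + N) ≤ ∑' n : ℕ, ((n:ℝ)+1) * q ^ n := by
      have hsp := (Summable.sum_add_tsum_nat_add (f := fun n : ℕ => ((n:ℝ)+1) * q ^ n) N hGsum).symm
      have hnn : 0 ≤ ∑ i ∈ Finset.range N, (((i:ℝ)+1) * q ^ i) :=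
        Finset.sum_nonneg fun i _ => by positivity
      push_cast at hsp ⊢
      linarith
    have h4 : ∑' n : ℕ, ((n:ℝ)+1) * q ^ n = ((1-q)^2)⁻¹ := by
      have := aux_geom19 (𝕜 := ℝ) (by rwa [Real.norm_eq_abs])
      simpa using this
    calc ∑' n : ℕ, ‖T (n + N)‖ * q ^ (n + N)
        ≤ (ε/4) * ∑' n : ℕ, (((n + N : ℕ):ℝ)+1) * q ^ (n + N) := by rw [← h2]; exact h1
      _ ≤ (ε/4) * ((1-q)^2)⁻¹ := by
          rw [← h4]; exact mul_le_mul_of_nonneg_left h3 (by positivity)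
  have hhead : ∑ i ∈ Finset.range N, ‖T i‖ * q ^ i ≤ B := by
    rw [hBdef]
    apply Finset.sum_le_sum
    intro i _
    calc ‖T i‖ * q ^ i ≤ ‖T i‖ * 1 := by
          apply mul_le_mul_of_nonneg_left _ (norm_nonneg _)
          exact pow_le_one₀ hq0.le hq1.le
      _ = ‖T i‖ := mul_one _
  -- final computation
  have hnormfac : ‖((1:ℂ) - q)^2‖ = (1 - q)^2 := by
    rw [norm_pow]
    congr 1
    rw [show ((1:ℂ) - (q:ℂ)) = (((1 - q : ℝ)):ℂ) by push_cast; ring,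
      Complex.norm_real, Real.norm_eq_abs, abs_of_pos (by linarith)]
  rw [norm_mul, hnormfac]
  have hq1ne : (1:ℝ) - q ≠ 0 := by linarith
  have hfinal : (1-q)^2 * ‖∑' n : ℕ, T n * (q:ℂ) ^ n‖
      ≤ (1-q)^2 * (B + (ε/4) * ((1-q)^2)⁻¹) := by
    apply mul_le_mul_of_nonneg_left _ (by positivity)
    calc ‖∑' n : ℕ, T n * (q:ℂ) ^ n‖ ≤ ∑' n : ℕ, ‖T n‖ * q ^ n := hnorm_le
      _ = (∑ i ∈ Finset.range N, ‖T i‖ * q ^ i) + ∑' n : ℕ, ‖T (n+N)‖ * q ^ (n+N) := hsplit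
      _ ≤ B + (ε/4) * ((1-q)^2)⁻¹ := add_le_add hhead htail
  have hexp : (1-q)^2 * (B + (ε/4) * ((1-q)^2)⁻¹) = (1-q)^2 * B + ε/4 := by
    field_simp
  have hsq : (1-q)^2 * B < ε/4 := by
    have h2 : 0 < 1 - q := by linarith
    have h3 : (1-q)^2 ≤ 1 - q := by nlinarith
    have h4 : 1 - q < ε/(4*(B+1)) := hdlt.trans_le (min_le_right _ _)
    have hB1 : (0:ℝ) < B + 1 := by linarith
    have h7 : (1-q)^2 * B ≤ (1-q) * B := by nlinarith
    have h5 : (1-q) * B ≤ ε/(4*(B+1)) * B :=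
      mul_le_mul_of_nonneg_right h4.le hB0
    have h6 : ε/(4*(B+1)) * B < ε/4 := by
      rw [div_mul_eq_mul_div, div_lt_div_iff₀ (by positivity) (by norm_num)]
      nlinarith
    linarith
  calc (1-q)^2 * ‖∑' n : ℕ, T n * (q:ℂ) ^ n‖ ≤ (1-q)^2 * B + ε/4 := by
        rw [← hexp]; exact hfinal
    _ < ε/4 + ε/4 := by linarith
    _ < ε := by linarith
end
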